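/- arXiv:1805.05306 — 4 statements merged into one kernel-verified Lean document; each statement's English description precedes it below -/
import Mathlib

section
/- Let R be a 3-regular graph and Λ(R) its triangular-expansion. If R is Hamiltonian, then Λ(R) allows a SOET with respect to V(R). -/
universe u v w

attribute [local instance 10] Classical.propDecidable

noncomputable section

variable {V : Type u} {E : Type v} {W : Type w}

/-- A finite labeled simple graph: a finite vertex set together with an
adjacency relation.  Well-formedness (symmetry, irreflexivity, support on the
vertex set) is captured by `LGraph.IsGraph`. -/
structure LGraph (V : Type u) where
  verts : Finset V
  Adj : V → V → Prop

namespace LGraph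

/-- `G` is an honest simple graph: `Adj` is symmetric, irreflexive and
supported on the vertex set. -/
def IsGraph (G : LGraph V) : Prop :=
  (∀ a b, G.Adj a b → G.Adj b a) ∧ (∀ a, ¬ G.Adj a a) ∧
    (∀ a b, G.Adj a b → a ∈ G.verts ∧ b ∈ G.verts)

/-- Local complementation at a vertex `v`: toggle every edge between two
distinct neighbours of `v`. -/
def localComp (G : LGraph V) (v : V) : LGraph V :=
  ⟨G.verts, fun a b => a ≠ b ∧ Xor' (G.Adj a b) (G.Adj v a ∧ G.Adj v b)⟩

/-- `τ_{v_k} ∘ ⋯ ∘ τ_{v_1}(G)` for a sequence `l = v_1 … v_k`. -/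
def localCompSeq (G : LGraph V) (l : List V) : LGraph V :=
  l.foldl LGraph.localComp G

/-- Induced subgraph on a set of vertices `A`. -/
def induce (G : LGraph V) (A : Finset V) : LGraph V :=
  ⟨G.verts ∩ A, fun a b => G.Adj a b ∧ a ∈ A ∧ b ∈ A⟩

/-- Vertex deletion `G \ v`. -/
def delete (G : LGraph V) (v : V) : LGraph V :=
  G.induce (G.verts.erase v)

/-- `G'` is a vertex-minor of `G`: there is a sequence of local
complementations at vertices of `G` after which the induced subgraph
on `V(G')` equals `G'`. -/
def IsVertexMinor (G' G : LGraph V) : Prop :=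
  ∃ l : List V, (∀ x ∈ l, x ∈ G.verts) ∧ (G.localCompSeq l).induce G'.verts = G'

/-- `G` and `G'` are related by a sequence of local complementations. -/
def LCEquiv (G G' : LGraph V) : Prop :=
  ∃ l : List V, (∀ x ∈ l, x ∈ G.verts) ∧ G.localCompSeq l = G'

/-- Connectedness of a labeled graph. -/
def Connected (G : LGraph V) : Prop :=
  G.verts.Nonempty ∧ ∀ a ∈ G.verts, ∀ b ∈ G.verts, Relation.ReflTransGen G.Adj a b

end LGraph

/-- The star graph on vertex set `V'` with center `c`. -/
def starGraph (V' : Finset V) (c : V) : LGraph V :=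
  ⟨V', fun a b => a ∈ V' ∧ b ∈ V' ∧ a ≠ b ∧ (a = c ∨ b = c)⟩

/-- `S_{V'} < G`: some star graph on the vertex set `V'` is a vertex-minor
of `G` (all stars on `V'` are LC-equivalent, so the choice of center is
immaterial). -/
def HasStarVertexMinor (G : LGraph V) (V' : Finset V) : Prop :=
  ∃ c ∈ V', (starGraph V' c).IsVertexMinor G

/-- An undirected multigraph: an abstract finite edge set `edges` over an edge
type `E`, with each edge assigned an unordered pair of endpoints (possibly
equal, giving a self-loop).  Parallel edges are distinct elements of `edges`
with the same endpoints. -/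
structure Multigraph (V : Type u) (E : Type v) where
  verts : Finset V
  edges : Finset E
  ends : E → Sym2 V

namespace Multigraph

/-- All endpoints of edges lie in the vertex set. -/
def IsWellFormed (F : Multigraph V E) : Prop :=
  ∀ e ∈ F.edges, ∀ x, x ∈ F.ends e → x ∈ F.verts

/-- Degree of a vertex; a self-loop contributes `2`. -/
def degree (F : Multigraph V E) (x : V) : ℕ :=
  ∑ e ∈ F.edges, (if F.ends e = s(x, x) then 2 else if x ∈ F.ends e then 1 else 0)

/-- Every vertex has degree `4`. -/
def IsFourRegular (F : Multigraph V E) : Prop := ∀ x ∈ F.verts, F.degree x = 4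

/-- Connectedness of a multigraph. -/
def Connected (F : Multigraph V E) : Prop :=
  F.verts.Nonempty ∧ ∀ a ∈ F.verts, ∀ b ∈ F.verts,
    Relation.ReflTransGen (fun x y => ∃ e ∈ F.edges, F.ends e = s(x, y)) a b

/-- `(vs, es)` is an Eulerian tour of `F`: a closed trail traversing each
edge exactly once.  `vs` is the cyclic list of visited vertices and `es` the
corresponding list of edges, edge `es[i]` joining `vs[i]` to `vs[i+1 mod n]`.
The word `vs` is the induced double occurrence word `m(U)`. -/
def IsEulerianTour (F : Multigraph V E) (vs : List V) (es : List E) : Prop :=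
  vs ≠ [] ∧ es.length = vs.length ∧ es.Nodup ∧ es.toFinset = F.edges ∧
    (∀ x ∈ vs, x ∈ F.verts) ∧
    (∀ p ∈ es.zip (vs.zip (vs.rotate 1)), F.ends p.1 = s(p.2.1, p.2.2))

/-- `(vs, es)` is a semi-ordered Eulerian tour (SOET) of `F` with respect to
`V'`: an Eulerian tour whose induced word, restricted to the letters of `V'`,
has the form `s s` for an enumeration `s` of `V'`. -/
def IsSOET (F : Multigraph V E) (V' : Finset V) (vs : List V) (es : List E) : Prop :=
  F.IsEulerianTour vs es ∧
    ∃ s : List V, s.Nodup ∧ s.toFinset = V' ∧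
      vs.filter (fun x => decide (x ∈ V')) = s ++ s

/-- `F` allows a SOET with respect to `V'`. -/
def HasSOET (F : Multigraph V E) (V' : Finset V) : Prop :=
  ∃ vs es, F.IsSOET V' vs es

end Multigraph

/-- Vertex type of a triangular-expansion: `baseV v` is the original vertex
`v`, `outerV v w` is the outer vertex `v^(w)` of the triangle subgraph `T_v`
(connecting towards the neighbour `w`), and `innerV v w` is the inner vertex
`ṽ^(w)`. -/
abbrev TriV (V : Type u) := V ⊕ ((V × V) ⊕ (V × V))

def baseV (x : V) : TriV V := Sum.inl x
def outerV (x y : V) : TriV V := Sum.inr (Sum.inl (x, y))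
def innerV (x y : V) : TriV V := Sum.inr (Sum.inr (x, y))

/-- The neighbours of `x` in `G`, as a finset. -/
def LGraph.nbrFinset (G : LGraph V) (x : V) : Finset V :=
  G.verts.filter fun u => G.Adj x u

/-- Every vertex has exactly three neighbours. -/
def LGraph.IsThreeRegular (G : LGraph V) : Prop :=
  ∀ x ∈ G.verts, (G.nbrFinset x).card = 3

/-- `G` has a Hamiltonian cycle: a cyclic sequence of (at least three)
pairwise distinct vertices covering `V(G)`, with consecutive ones adjacent. -/
def LGraph.IsHamiltonian (G : LGraph V) : Prop :=
  ∃ vs : List V, 3 ≤ vs.length ∧ vs.Nodup ∧ vs.toFinset = G.verts ∧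
    ∀ p ∈ vs.zip (vs.rotate 1), G.Adj p.1 p.2

/-- The nine edges of the triangle subgraph `T_x`, where the three
neighbours of `x` have been assigned the roles `(a, b, c) = (x, y, z)` of
Definition 20 of the paper. -/
def triExpIntra (x a b c : V) : Multiset (Sym2 (TriV V)) :=
  {s(baseV x, innerV x b), s(baseV x, innerV x c), s(baseV x, outerV x b),
   s(baseV x, outerV x c), s(innerV x b, innerV x c), s(outerV x b, innerV x b),
   s(outerV x c, innerV x c), s(outerV x a, innerV x b), s(outerV x a, innerV x c)}

/-- The vertex set of the triangular-expansion determined by the role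
assignment `ch`. -/
def triExpVerts (R : LGraph V) (ch : V → V × V × V) : Finset (TriV V) :=
  R.verts.biUnion fun x =>
    {baseV x, outerV x (ch x).1, outerV x (ch x).2.1, outerV x (ch x).2.2,
     innerV x (ch x).2.1, innerV x (ch x).2.2}

/-- The edge multiset of the triangular-expansion determined by `ch`:
the nine intra-triangle edges for each vertex, together with a double edge
`{x^(w), w^(x)}` for every edge `(x, w)` of `R` (each unordered edge of `R`
is counted once from each direction, giving multiplicity two). -/
def triExpEdges (R : LGraph V) (ch : V → V × V × V) : Multiset (Sym2 (TriV V)) :=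
  (R.verts.val.bind fun x => triExpIntra x (ch x).1 (ch x).2.1 (ch x).2.2) +
  (R.verts.val.bind fun x => (R.nbrFinset x).val.map fun y => s(outerV x y, outerV y x))

/-- `Λ` is a triangular-expansion of the 3-regular graph `R`: for some
assignment `ch` of the roles `(x, y, z)` to the three neighbours of each
vertex, the vertex set of `Λ` is `triExpVerts R ch` and the multiset of
edge-endpoints of `Λ` is exactly `triExpEdges R ch`. -/
def IsTriangularExpansion (R : LGraph V) (Lam : Multigraph (TriV V) E) : Prop :=
  ∃ ch : V → V × V × V,
    (∀ x ∈ R.verts, (ch x).1 ≠ (ch x).2.1 ∧ (ch x).1 ≠ (ch x).2.2 ∧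
      (ch x).2.1 ≠ (ch x).2.2 ∧ R.nbrFinset x = {(ch x).1, (ch x).2.1, (ch x).2.2}) ∧
    Lam.verts = triExpVerts R ch ∧
    Multiset.map Lam.ends Lam.edges.val = triExpEdges R ch

/-- `a` and `b` are consecutive (with respect to `V'`) in the word `vs`:
`vs` contains a sub-word `a X b` or `b X a` with no letter of `X` in `V'`. -/
def ConsecutiveIn (vs : List W) (V' : Finset W) (a b : W) : Prop :=
  ∃ A X B : List W, (∀ x ∈ X, x ∉ V') ∧
    (vs = A ++ a :: (X ++ b :: B) ∨ vs = A ++ b :: (X ++ a :: B))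

/-- `(vs, es)` is a HAMSOET on `Λ` with respect to `R`: a SOET with respect
to `V(R)` in which any two vertices of `V(R)` that are consecutive are
adjacent in `R`. -/
def IsHAMSOET (R : LGraph V) (Lam : Multigraph (TriV V) E)
    (vs : List (TriV V)) (es : List E) : Prop :=
  Lam.IsSOET (R.verts.image baseV) vs es ∧
    ∀ a b : V, a ∈ R.verts → b ∈ R.verts →
      ConsecutiveIn vs (R.verts.image baseV) (baseV a) (baseV b) → R.Adj a b

namespace SoetAux

/-- edges of a closed walk: `chainEdges vs b` lists `s(vs[i], vs[i+1])` with the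
final vertex followed by `b`. -/
def chainEdges : List W → W → List (Sym2 W)
  | [], _ => []
  | v :: vs, b => s(v, vs.headD b) :: chainEdges vs b

@[simp] lemma chainEdges_nil (b : W) : chainEdges [] b = [] := rfl
@[simp] lemma chainEdges_cons (v : W) (vs : List W) (b : W) :
    chainEdges (v :: vs) b = s(v, vs.headD b) :: chainEdges vs b := rfl

lemma chainEdges_length (vs : List W) (b : W) : (chainEdges vs b).length = vs.length := by
  induction vs with
  | nil => rfl
  | cons v vs ih => simp [chainEdges, ih]

lemma headD_append (l1 l2 : List W) (b : W) :
    (l1 ++ l2).headD b = l1.headD (l2.headD b) := by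
  cases l1 <;> simp

lemma chainEdges_append (l1 l2 : List W) (b : W) :
    chainEdges (l1 ++ l2) b = chainEdges l1 (l2.headD b) ++ chainEdges l2 b := by
  induction l1 with
  | nil => simp
  | cons v l1 ih =>
    show chainEdges (v :: (l1 ++ l2)) b = _
    rw [chainEdges_cons, ih, headD_append, chainEdges_cons, List.cons_append]

lemma chainEdges_spec : ∀ (vs : List W) (b : W),
    ∀ p ∈ (chainEdges vs b).zip (vs.zip (vs.drop 1 ++ [b])), p.1 = s(p.2.1, p.2.2)
  | [], _ => by simp
  | [v], b => by simp
  | v :: w :: t, b => by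
    intro p hp
    simp only [chainEdges, List.drop_succ_cons, List.drop_zero, List.headD_cons,
      List.cons_append, List.zip_cons_cons, List.mem_cons] at hp
    rcases hp with rfl | hp
    · rfl
    · exact chainEdges_spec (w :: t) b p (by simpa using hp)

lemma chainEdges_spec_rotate (v : W) (t : List W) :
    ∀ p ∈ (chainEdges (v :: t) v).zip ((v :: t).zip ((v :: t).rotate 1)),
      p.1 = s(p.2.1, p.2.2) := by
  have h := chainEdges_spec (v :: t) v
  simpa [List.rotate_cons_succ] using h

/-- choose list of edge labels realizing a given list of endpoint pairs -/
lemma exists_list_of_map_eq {α : Type*} {β : Type*} (f : α → β) :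
    ∀ (l : List β) (s : Multiset α), Multiset.map f s = ↑l →
      ∃ es : List α, (↑es : Multiset α) = s ∧ es.map f = l := by
  classical
  intro l
  induction l with
  | nil =>
    intro s h
    refine ⟨[], ?_, rfl⟩
    have hs : s = 0 := by
      have hc := congrArg Multiset.card h
      simp only [Multiset.card_map, Multiset.coe_nil, Multiset.card_zero] at hc
      exact Multiset.card_eq_zero.mp hc
    simp [hs]
  | cons b l ih =>
    intro s h
    have h' : Multiset.map f s = b ::ₘ (↑l : Multiset β) := by simpa using h
    obtain ⟨a, ha, hfa, hrest⟩ := (Multiset.map_eq_cons f s (↑l) b).mpr h'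
    obtain ⟨es, hes, hmap⟩ := ih (s.erase a) hrest
    refine ⟨a :: es, ?_, by simp [hmap, hfa]⟩
    have : (↑(a :: es) : Multiset α) = a ::ₘ (↑es : Multiset α) := rfl
    rw [this, hes, Multiset.cons_erase ha]


def A1 (x a b c : V) (d : Bool) : List (TriV V) :=
  [outerV x b, innerV x b, outerV x a] ++ (if d then [outerV a x, outerV x a] else [])
    ++ [innerV x c, baseV x, outerV x c]
def A1r (x a b c : V) (d : Bool) : List (TriV V) :=
  [outerV x c, baseV x, innerV x c, outerV x a] ++ (if d then [outerV a x, outerV x a] else [])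
    ++ [innerV x b, outerV x b]
def B1 (x a b c : V) : List (TriV V) :=
  [outerV x b, baseV x, innerV x b, innerV x c, outerV x c]
def B1r (x a b c : V) : List (TriV V) :=
  [outerV x c, innerV x c, innerV x b, baseV x, outerV x b]
def A2 (x a u w : V) (d : Bool) : List (TriV V) :=
  [outerV x a, innerV x u, outerV x u] ++ (if d then [outerV u x, outerV x u] else [])
    ++ [baseV x, innerV x w, outerV x w]
def A2r (x a u w : V) (d : Bool) : List (TriV V) :=
  [outerV x w, innerV x w, baseV x, outerV x u] ++ (if d then [outerV u x, outerV x u] else [])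
    ++ [innerV x u, outerV x a]
def B2 (x a u w : V) : List (TriV V) :=
  [outerV x a, innerV x w, innerV x u, baseV x, outerV x w]
def B2r (x a u w : V) : List (TriV V) :=
  [outerV x w, baseV x, innerV x u, innerV x w, outerV x a]

def chordOf (a b c p q : V) : V :=
  if a ≠ p ∧ a ≠ q then a else if b ≠ p ∧ b ≠ q then b else c

def seg1 (x a b c p q : V) (d : Bool) : List (TriV V) :=
  if p = a then (if q = b then A2 x a c b d else A2 x a b c d)
  else if q = a then (if p = b then A2r x a c b d else A2r x a b c d)
  else if p = b then A1 x a b c d else A1r x a b c d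

def seg2 (x a b c p q : V) : List (TriV V) :=
  if p = a then (if q = b then B2 x a c b else B2 x a b c)
  else if q = a then (if p = b then B2r x a c b else B2r x a b c)
  else if p = b then B1 x a b c else B1r x a b c


section PerVertex
variable {x a b c p q : V} {z1 z2 : TriV V} {d : Bool}

lemma seg_edges (x a b c p q : V) (z1 z2 : TriV V) (d : Bool)
    (hab : a ≠ b) (hac : a ≠ c) (hbc : b ≠ c)
    (hp : p = a ∨ p = b ∨ p = c) (hq : q = a ∨ q = b ∨ q = c) (hpq : p ≠ q) :
    (↑(chainEdges (seg1 x a b c p q d) z1) : Multiset (Sym2 (TriV V))) +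
      ↑(chainEdges (seg2 x a b c p q) z2) =
    triExpIntra x a b c + ({s(outerV x q, z1)} + {s(outerV x q, z2)}) +
      (if d then ({s(outerV x (chordOf a b c p q), outerV (chordOf a b c p q) x),
                   s(outerV x (chordOf a b c p q), outerV (chordOf a b c p q) x)} : Multiset _) else 0) := by
  have hba := hab.symm; have hca := hac.symm; have hcb := hbc.symm
  rcases hp with hp | hp | hp <;> rcases hq with hq | hq | hq <;> rw [hp, hq] at hpq ⊢ <;>
    first
      | exact absurd rfl hpq
      | (cases d <;>
          · simp only [seg1, seg2, chordOf, A1, A1r, A2, A2r, B1, B1r, B2, B2r,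
              ne_eq, not_false_iff, ite_true, ite_false, if_true, if_false,
              Bool.false_eq_true, Bool.true_eq_false, and_self, not_true, not_false_eq_true,
              false_and, and_false, true_and, and_true, not_not,
              hab, hac, hbc, hba, hca, hcb,
              if_neg hba, if_neg hbc, if_neg hca, if_neg hcb, if_neg hab, if_neg hac,
              List.append_nil, List.cons_append, List.nil_append]
            simp only [chainEdges_cons, chainEdges_nil, List.headD_cons, List.headD_nil]
            simp only [Sym2.eq_swap (a := innerV x b) (b := outerV x a),
              Sym2.eq_swap (a := innerV x c) (b := outerV x a),
              Sym2.eq_swap (a := innerV x b) (b := baseV x),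
              Sym2.eq_swap (a := innerV x c) (b := baseV x),
              Sym2.eq_swap (a := outerV x a) (b := baseV x),
              Sym2.eq_swap (a := outerV x b) (b := baseV x),
              Sym2.eq_swap (a := outerV x c) (b := baseV x),
              Sym2.eq_swap (a := innerV x b) (b := outerV x b),
              Sym2.eq_swap (a := innerV x c) (b := outerV x c),
              Sym2.eq_swap (a := innerV x c) (b := innerV x b),
              Sym2.eq_swap (a := outerV a x) (b := outerV x a),
              Sym2.eq_swap (a := outerV b x) (b := outerV x b),
              Sym2.eq_swap (a := outerV c x) (b := outerV x c)]
            simp only [triExpIntra, Multiset.insert_eq_cons, ← Multiset.cons_coe,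
              Multiset.coe_nil, ← Multiset.singleton_add]
            abel)

lemma seg1_headD (b0 : TriV V) (hp : p = a ∨ p = b ∨ p = c) (hq : q = a ∨ q = b ∨ q = c)
    (hpq : p ≠ q) (hab : a ≠ b) (hac : a ≠ c) (hbc : b ≠ c) :
    (seg1 x a b c p q d).headD b0 = outerV x p := by
  have hba := hab.symm; have hca := hac.symm; have hcb := hbc.symm
  rcases hp with hp | hp | hp <;> rcases hq with hq | hq | hq <;> rw [hp, hq] at hpq ⊢ <;>
    first
      | exact absurd rfl hpq
      | simp [seg1, A1, A1r, A2, A2r, hba, hca, hcb, hab, hac, hbc]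

lemma seg2_headD (b0 : TriV V) (hp : p = a ∨ p = b ∨ p = c) (hq : q = a ∨ q = b ∨ q = c)
    (hpq : p ≠ q) (hab : a ≠ b) (hac : a ≠ c) (hbc : b ≠ c) :
    (seg2 x a b c p q).headD b0 = outerV x p := by
  have hba := hab.symm; have hca := hac.symm; have hcb := hbc.symm
  rcases hp with hp | hp | hp <;> rcases hq with hq | hq | hq <;> rw [hp, hq] at hpq ⊢ <;>
    first
      | exact absurd rfl hpq
      | simp [seg2, B1, B1r, B2, B2r, hba, hca, hcb, hab, hac, hbc]

set_option maxHeartbeats 1000000 in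
lemma seg_mem (hp : p = a ∨ p = b ∨ p = c) (hq : q = a ∨ q = b ∨ q = c)
    (hpq : p ≠ q) (hab : a ≠ b) (hac : a ≠ c) (hbc : b ≠ c) :
    ∀ y ∈ seg1 x a b c p q d ++ seg2 x a b c p q,
      y = baseV x ∨ y = outerV x a ∨ y = outerV x b ∨ y = outerV x c ∨
        y = innerV x b ∨ y = innerV x c ∨ y = outerV (chordOf a b c p q) x := by
  have hba := hab.symm; have hca := hac.symm; have hcb := hbc.symm
  intro y hy
  rcases hp with hp | hp | hp <;> rcases hq with hq | hq | hq <;> rw [hp, hq] at hpq hy ⊢ <;>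
    first
      | exact absurd rfl hpq
      | (cases d <;>
          · simp only [seg1, seg2, chordOf, A1, A1r, A2, A2r, B1, B1r, B2, B2r,
              ne_eq, not_false_iff, ite_true, ite_false, if_true, if_false,
              Bool.false_eq_true, Bool.true_eq_false, and_self, not_true, not_false_eq_true,
              false_and, and_false, true_and, and_true, not_not,
              hab, hac, hbc, hba, hca, hcb,
              if_neg hba, if_neg hbc, if_neg hca, if_neg hcb, if_neg hab, if_neg hac,
              List.append_nil, List.cons_append, List.nil_append,
              List.mem_cons, List.mem_append, List.not_mem_nil, or_false,
              List.mem_singleton] at hy ⊢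
            tauto)

set_option maxHeartbeats 1000000 in
lemma seg_filter (Fb : Finset (TriV V))
    (hbase : baseV x ∈ Fb) (houter : ∀ u w : V, outerV u w ∉ Fb)
    (hinner : ∀ u w : V, innerV u w ∉ Fb)
    (hp : p = a ∨ p = b ∨ p = c) (hq : q = a ∨ q = b ∨ q = c)
    (hpq : p ≠ q) (hab : a ≠ b) (hac : a ≠ c) (hbc : b ≠ c) :
    (seg1 x a b c p q d).filter (fun y => decide (y ∈ Fb)) = [baseV x] ∧
    (seg2 x a b c p q).filter (fun y => decide (y ∈ Fb)) = [baseV x] := by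
  have hba := hab.symm; have hca := hac.symm; have hcb := hbc.symm
  rcases hp with hp | hp | hp <;> rcases hq with hq | hq | hq <;> rw [hp, hq] at hpq ⊢ <;>
    first
      | exact absurd rfl hpq
      | (cases d <;>
          · constructor <;>
              simp [seg1, seg2, A1, A1r, A2, A2r, B1, B1r, B2, B2r, List.filter_cons,
                hbase, houter, hinner, decide_eq_true_eq,
                hab, hac, hbc, hba, hca, hcb])

end PerVertex

section Global
variable {M : Type*} [AddCommMonoid M]

lemma chainEdges_flatMap (T : ℕ → List W) (H : ℕ → W) (N : ℕ)
    (hH : ∀ i < N, ∀ b, (T i).headD b = H i) :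
    ∀ m k, k + m ≤ N →
      chainEdges ((List.range' k m).flatMap T) (H (k + m)) =
        (List.range' k m).flatMap (fun i => chainEdges (T i) (H (i + 1))) := by
  intro m
  induction m with
  | zero => intro k _; simp
  | succ m ih =>
    intro k hk
    rw [List.range'_succ]
    simp only [List.flatMap_cons]
    rw [chainEdges_append]
    have h1 : ((List.range' (k+1) m).flatMap T).headD (H (k + (m+1))) = H (k + 1) := by
      cases m with
      | zero => simp
      | succ m' =>
        rw [List.range'_succ]
        simp only [List.flatMap_cons]
        rw [headD_append]
        exact hH (k+1) (by omega) _
    rw [h1]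
    have h2 := ih (k+1) (by omega)
    rw [show k + 1 + m = k + (m + 1) by omega] at h2
    rw [h2]

lemma coe_flatMap_range (F : ℕ → List W) :
    ∀ N, (↑((List.range N).flatMap F) : Multiset W) = ∑ i ∈ Finset.range N, (↑(F i) : Multiset W) := by
  intro N
  induction N with
  | zero => simp
  | succ N ih =>
    rw [List.range_succ, List.flatMap_append, Finset.sum_range_succ, ← ih]
    simp

lemma sum_range_shift_one (f : ℕ → M) (n : ℕ) (hn : 1 ≤ n) (hf : ∀ i, f (i + n) = f i) :
    ∑ i ∈ Finset.range n, f (i + 1) = ∑ i ∈ Finset.range n, f i := by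
  obtain ⟨m, rfl⟩ : ∃ m, n = m + 1 := ⟨n - 1, by omega⟩
  have h0 : f (m + 1) = f 0 := by simpa using hf 0
  rw [Finset.sum_range_succ, Finset.sum_range_succ', h0]

lemma sum_range_shift (f : ℕ → M) (n : ℕ) (hn : 1 ≤ n) (hf : ∀ i, f (i + n) = f i) :
    ∀ k, ∑ i ∈ Finset.range n, f (i + k) = ∑ i ∈ Finset.range n, f i := by
  intro k
  induction k with
  | zero => simp
  | succ k ih =>
    have h1 : ∑ i ∈ Finset.range n, f (i + 1 + k) = ∑ i ∈ Finset.range n, f (i + k) := by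
      refine sum_range_shift_one (fun j => f (j + k)) n hn ?_
      intro i
      rw [show i + n + k = i + k + n by omega, hf]
    calc ∑ i ∈ Finset.range n, f (i + (k+1))
        = ∑ i ∈ Finset.range n, f (i + 1 + k) := by
          apply Finset.sum_congr rfl; intro i _; congr 1; omega
      _ = ∑ i ∈ Finset.range n, f (i + k) := h1
      _ = _ := ih

lemma pairing_sum (n : ℕ) (J : ℕ → ℕ) (e : ℕ → M)
    (hJlt : ∀ i < n, J i < n) (hJJ : ∀ i < n, J (J i) = i)
    (hJne : ∀ i < n, J i ≠ i) (he : ∀ i < n, e (J i) = e i) :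
    ∑ i ∈ Finset.range n, e i =
      ∑ i ∈ Finset.range n, (if i < J i then e i + e i else 0) := by
  classical
  have hsplit := Finset.sum_filter_add_sum_filter_not (Finset.range n) (fun i => i < J i) e
  have hswap : ∑ i ∈ (Finset.range n).filter (fun i => ¬ i < J i), e i =
      ∑ i ∈ (Finset.range n).filter (fun i => i < J i), e i := by
    apply Finset.sum_nbij' J J
    · intro i hi
      simp only [Finset.mem_filter, Finset.mem_range] at hi ⊢
      obtain ⟨hi1, hi2⟩ := hi
      refine ⟨hJlt i hi1, ?_⟩
      rw [hJJ i hi1]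
      have := hJne i hi1
      omega
    · intro i hi
      simp only [Finset.mem_filter, Finset.mem_range] at hi ⊢
      obtain ⟨hi1, hi2⟩ := hi
      refine ⟨hJlt i hi1, ?_⟩
      rw [hJJ i hi1]
      omega
    · intro i hi; simp only [Finset.mem_filter, Finset.mem_range] at hi; exact hJJ i hi.1
    · intro i hi; simp only [Finset.mem_filter, Finset.mem_range] at hi; exact hJJ i hi.1
    · intro i hi; simp only [Finset.mem_filter, Finset.mem_range] at hi
      exact (he i hi.1).symm
  rw [Finset.sum_ite, Finset.sum_const_zero, add_zero, Finset.sum_add_distrib, ← hsplit, hswap]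

lemma list_bind_eq_sum {α β : Type*} (f : α → Multiset β) (j : α) :
    ∀ l : List α, Multiset.bind (↑l) f = ∑ i ∈ Finset.range l.length, f (l.getD i j)
  | [] => by simp
  | a :: l => by
    have : ((a :: l : List α) : Multiset α) = a ::ₘ ↑l := rfl
    rw [this, Multiset.cons_bind, list_bind_eq_sum f j l]
    rw [List.length_cons, Finset.sum_range_succ']
    simp [List.getD, add_comm]

end Global

section Chord
variable {a b c p q z : V}

lemma chordOf_spec (hab : a ≠ b) (hac : a ≠ c) (hbc : b ≠ c)
    (hp : p = a ∨ p = b ∨ p = c) (hq : q = a ∨ q = b ∨ q = c) (hpq : p ≠ q) :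
    (chordOf a b c p q = a ∨ chordOf a b c p q = b ∨ chordOf a b c p q = c) ∧
      chordOf a b c p q ≠ p ∧ chordOf a b c p q ≠ q := by
  have hba := hab.symm; have hca := hac.symm; have hcb := hbc.symm
  rcases hp with hp | hp | hp <;> rcases hq with hq | hq | hq <;> rw [hp, hq] at hpq ⊢ <;>
    first
      | exact absurd rfl hpq
      | (refine ⟨?_, ?_, ?_⟩ <;> simp [chordOf, hab, hac, hbc, hba, hca, hcb])

lemma chordOf_unique (hab : a ≠ b) (hac : a ≠ c) (hbc : b ≠ c)
    (hp : p = a ∨ p = b ∨ p = c) (hq : q = a ∨ q = b ∨ q = c) (hpq : p ≠ q)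
    (hz : z = a ∨ z = b ∨ z = c) (hzp : z ≠ p) (hzq : z ≠ q) :
    z = chordOf a b c p q := by
  have hba := hab.symm; have hca := hac.symm; have hcb := hbc.symm
  rcases hp with hp | hp | hp <;> rcases hq with hq | hq | hq <;>
    (rw [hp] at hpq hzp; rw [hq] at hpq hzq; rw [hp, hq]) <;>
    first
      | exact absurd rfl hpq
      | (rcases hz with hz | hz | hz <;> rw [hz] at hzp hzq ⊢ <;>
          first
            | exact absurd rfl hzp
            | exact absurd rfl hzq
            | simp [chordOf, hab, hac, hbc, hba, hca, hcb])

lemma roles_perm (hab : a ≠ b) (hac : a ≠ c) (hbc : b ≠ c)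
    (hp : p = a ∨ p = b ∨ p = c) (hq : q = a ∨ q = b ∨ q = c) (hpq : p ≠ q) :
    ({a, b, c} : Multiset V) = {p, q, chordOf a b c p q} := by
  have hba := hab.symm; have hca := hac.symm; have hcb := hbc.symm
  rcases hp with hp | hp | hp <;> rcases hq with hq | hq | hq <;> rw [hp, hq] at hpq ⊢ <;>
    first
      | exact absurd rfl hpq
      | (simp only [chordOf, hab, hac, hbc, hba, hca, hcb, ne_eq, not_false_iff,
          and_self, if_true, if_false, ite_true, ite_false, not_true, not_false_eq_true,
          false_and, and_false, true_and, and_true] <;>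
         simp only [Multiset.insert_eq_cons, ← Multiset.singleton_add] <;>
         abel)

end Chord

section Mem
variable {x w : V}

lemma mem_triExpVerts_base {R : LGraph V} {ch : V → V × V × V} (hx : x ∈ R.verts) :
    baseV x ∈ triExpVerts R ch := by
  simp only [triExpVerts, Finset.mem_biUnion]
  exact ⟨x, hx, by simp⟩

lemma mem_triExpVerts_outer {R : LGraph V} {ch : V → V × V × V} (hx : x ∈ R.verts)
    (hw : w = (ch x).1 ∨ w = (ch x).2.1 ∨ w = (ch x).2.2) :
    outerV x w ∈ triExpVerts R ch := by
  simp only [triExpVerts, Finset.mem_biUnion]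
  refine ⟨x, hx, ?_⟩
  rcases hw with rfl | rfl | rfl <;> simp [outerV, baseV, innerV]

lemma mem_triExpVerts_inner {R : LGraph V} {ch : V → V × V × V} (hx : x ∈ R.verts)
    (hw : w = (ch x).2.1 ∨ w = (ch x).2.2) :
    innerV x w ∈ triExpVerts R ch := by
  simp only [triExpVerts, Finset.mem_biUnion]
  refine ⟨x, hx, ?_⟩
  rcases hw with rfl | rfl <;> simp [outerV, baseV, innerV]

lemma outer_not_mem_image {s : Finset V} {u w : V} : outerV u w ∉ s.image baseV := by
  simp [Finset.mem_image, baseV, outerV]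

lemma inner_not_mem_image {s : Finset V} {u w : V} : innerV u w ∉ s.image baseV := by
  simp [Finset.mem_image, baseV, innerV]

end Mem

section ListMisc

lemma filter_flatMap {α β : Type*} (l : List α) (f : α → List β) (P : β → Bool) :
    (l.flatMap f).filter P = l.flatMap fun a => (f a).filter P := by
  induction l with
  | nil => rfl
  | cons a l ih => simp [List.flatMap_cons, List.filter_append, ih]

lemma flatMap_congr {α β : Type*} {l : List α} {f f' : α → List β}
    (h : ∀ a ∈ l, f a = f' a) : l.flatMap f = l.flatMap f' := by
  induction l with
  | nil => rfl
  | cons a l ih =>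
    simp only [List.flatMap_cons]
    rw [h a (by simp), ih fun a ha => h a (by simp [ha])]

lemma seg1_ne_nil {x a b c p q : V} {d : Bool} : seg1 x a b c p q d ≠ [] := by
  unfold seg1 A1 A1r A2 A2r
  split_ifs <;> simp

lemma range_map_g {α : Type*} (l : List α) (g : ℕ → α) (hg : ∀ i (h : i < l.length), g i = l[i]) :
    (List.range l.length).map g = l := by
  apply List.ext_getElem
  · simp
  · intro i h1 h2
    simp only [List.getElem_map, List.getElem_range]
    exact hg i h2

lemma flatMap_singleton_map {α β : Type*} (l : List α) (f : α → β) :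
    l.flatMap (fun a => [f a]) = l.map f := by
  induction l <;> simp_all

end ListMisc

end SoetAux

open SoetAux

/-- if a 3-regular graph `R` is Hamiltonian, then its
triangular-expansion `Λ(R)` allows a SOET with respect to `V(R)`. -/
theorem hasSOET_of_hamiltonian (R : LGraph V) (hR : R.IsGraph)
    (h3 : R.IsThreeRegular) (Lam : Multigraph (TriV V) E)
    (hexp : IsTriangularExpansion R Lam)
    (hham : R.IsHamiltonian) :
    Lam.HasSOET (R.verts.image baseV) := by
  classical
  obtain ⟨ch, hch, hverts, hedges⟩ := hexp
  obtain ⟨cyc, hlen3, hnodup, hcycfin, hcycadj⟩ := hham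
  set n := cyc.length with hn
  have hnpos : 0 < n := by omega
  have hne : cyc ≠ [] := by
    intro h; rw [h] at hn; simp [hn] at hlen3
  set w0 : V := cyc.head hne with hw0
  set g : ℕ → V := fun i => cyc.getD (i % n) w0 with hgdef0
  have hmodlt : ∀ i : ℕ, i % n < n := fun i => Nat.mod_lt _ hnpos
  have hgdef : ∀ i : ℕ, g i = cyc[i % n]'(hmodlt i) :=
    fun i => List.getD_eq_getElem _ _ (hmodlt i)
  have hglt : ∀ i (h : i < n), g i = cyc[i]'h := by
    intro i h
    simp only [hgdef0, Nat.mod_eq_of_lt h]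
    exact List.getD_eq_getElem _ _ h
  have hgmod : ∀ i, g (i % n) = g i := by
    intro i; simp only [hgdef0]; rw [Nat.mod_mod_of_dvd _ dvd_rfl]
  have hgaddn : ∀ i, g (i + n) = g i := by
    intro i; simp only [hgdef0, Nat.add_mod_right]
  have hgmem : ∀ i, g i ∈ R.verts := by
    intro i
    rw [hgdef i, ← hcycfin]
    exact List.mem_toFinset.mpr (List.getElem_mem _)
  have hginj : ∀ i j, g i = g j → i % n = j % n := by
    intro i j h
    rw [hgdef i, hgdef j] at h
    exact (List.Nodup.getElem_inj_iff hnodup).mp h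
  have hgeq : ∀ i j, i % n = j % n → g i = g j := by
    intro i j h; simp only [hgdef0, h]
  have hAdj : ∀ i, R.Adj (g i) (g (i + 1)) := by
    intro i
    have hlz : (i % n) < (cyc.zip (cyc.rotate 1)).length := by
      rw [List.length_zip, List.length_rotate]
      simpa using hmodlt i
    have hz := hcycadj _ (List.getElem_mem hlz)
    rw [List.getElem_zip, List.getElem_rotate] at hz
    have e1 : g i = cyc[i % n]'(hmodlt i) := hgdef i
    have e2 : g (i + 1) = cyc[(i % n + 1) % n]'(hmodlt _) := by
      rw [← hgdef (i % n + 1)]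
      apply hgeq
      rw [Nat.add_mod i 1 n, Nat.mod_eq_of_lt (show 1 < n by omega)]
    rw [e1, e2]
    exact hz
  have hAdjP : ∀ i, R.Adj (g (i + (n-1))) (g i) := by
    intro i
    have h := hAdj (i + (n-1))
    rwa [show i + (n-1) + 1 = i + n by omega, hgaddn] at h
  have hPQ : ∀ i, g (i + (n-1)) ≠ g (i+1) := by
    intro i h
    have h2 : i + (n-1) ≡ i + 1 [MOD n] := hginj _ _ h
    have h4 : (n-1) ≡ 1 [MOD n] := Nat.ModEq.add_left_cancel' i h2
    have h5 : n - 1 = 1 := by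
      have := h4
      unfold Nat.ModEq at this
      rwa [Nat.mod_eq_of_lt (by omega), Nat.mod_eq_of_lt (by omega)] at this
    omega
  set A : ℕ → V := fun i => (ch (g i)).1 with hA
  set B : ℕ → V := fun i => (ch (g i)).2.1 with hB
  set C : ℕ → V := fun i => (ch (g i)).2.2 with hC
  have hchg := fun i => hch (g i) (hgmem i)
  have hABC : ∀ i, A i ≠ B i ∧ A i ≠ C i ∧ B i ≠ C i :=
    fun i => ⟨(hchg i).1, (hchg i).2.1, (hchg i).2.2.1⟩
  have hnbr : ∀ i, R.nbrFinset (g i) = {A i, B i, C i} := fun i => (hchg i).2.2.2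
  have hroledisj : ∀ i y, R.Adj (g i) y → y = A i ∨ y = B i ∨ y = C i := by
    intro i y h
    have hm : y ∈ R.nbrFinset (g i) := by
      simp only [LGraph.nbrFinset, Finset.mem_filter]
      exact ⟨(hR.2.2 _ _ h).2, h⟩
    rw [hnbr i] at hm
    simpa using hm
  have hP_mem : ∀ i, g (i + (n-1)) = A i ∨ g (i + (n-1)) = B i ∨ g (i + (n-1)) = C i :=
    fun i => hroledisj i _ (hR.1 _ _ (hAdjP i))
  have hQ_mem : ∀ i, g (i+1) = A i ∨ g (i+1) = B i ∨ g (i+1) = C i :=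
    fun i => hroledisj i _ (hAdj i)
  set r : ℕ → V := fun i => chordOf (A i) (B i) (C i) (g (i + (n-1))) (g (i+1)) with hrdef
  have hrspec : ∀ i, (r i = A i ∨ r i = B i ∨ r i = C i) ∧ r i ≠ g (i+(n-1)) ∧ r i ≠ g (i+1) :=
    fun i => chordOf_spec (hABC i).1 (hABC i).2.1 (hABC i).2.2 (hP_mem i) (hQ_mem i) (hPQ i)
  have hAdjR : ∀ i, R.Adj (g i) (r i) := by
    intro i
    have hm : r i ∈ R.nbrFinset (g i) := by
      rw [hnbr i]
      rcases (hrspec i).1 with h | h | h <;> simp [h]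
    exact (Finset.mem_filter.mp hm).2
  have hrvert : ∀ i, r i ∈ R.verts := fun i => (hR.2.2 _ _ (hAdjR i)).2
  have hrne : ∀ i, r i ≠ g i := by
    intro i h
    exact hR.2.1 (g i) (h ▸ hAdjR i)
  have hrmemcyc : ∀ i, r i ∈ cyc := by
    intro i
    rw [← List.mem_toFinset, hcycfin]
    exact hrvert i
  set J : ℕ → ℕ := fun i => List.idxOf (r i) cyc with hJdef
  have hJlt : ∀ i, J i < n := fun i => List.idxOf_lt_length_iff.mpr (hrmemcyc i)
  have hgJ : ∀ i, g (J i) = r i := by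
    intro i
    rw [hglt (J i) (hJlt i)]
    exact List.getElem_idxOf (hJlt i)
  have hindexg : ∀ i, i < n → List.idxOf (g i) cyc = i := by
    intro i h
    have h1 : List.idxOf (g i) cyc < n :=
      List.idxOf_lt_length_iff.mpr (by rw [hglt i h]; exact List.getElem_mem _)
    have h2 : cyc[List.idxOf (g i) cyc]'h1 = cyc[i]'h := by
      rw [← hglt i h]
      exact List.getElem_idxOf h1
    exact (List.Nodup.getElem_inj_iff hnodup).mp h2
  have hrr : ∀ i, r (J i) = g i := by
    intro i
    have hyx : R.Adj (g (J i)) (g i) := by rw [hgJ i]; exact hR.1 _ _ (hAdjR i)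
    have hxp : g i ≠ g (J i + (n-1)) := by
      intro h
      have h2 := hginj _ _ h
      have h3 : g (i+1) = g (J i) := by
        apply hgeq
        have h4 : (i + 1) % n = (J i + (n-1) + 1) % n := by
          rw [Nat.add_mod i 1 n, Nat.add_mod (J i + (n-1)) 1 n, h2]
        rwa [show J i + (n-1) + 1 = J i + n by omega, Nat.add_mod_right] at h4
      rw [hgJ i] at h3
      exact (hrspec i).2.2 h3.symm
    have hxq : g i ≠ g (J i + 1) := by
      intro h
      have h2 := hginj _ _ h
      have h3 : g (i + (n-1)) = g (J i) := by
        apply hgeq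
        have h4 : (i + (n-1)) % n = (J i + 1 + (n-1)) % n := by
          rw [Nat.add_mod i (n-1) n, Nat.add_mod (J i + 1) (n-1) n, h2]
        rwa [show J i + 1 + (n-1) = J i + n by omega, Nat.add_mod_right] at h4
      exact (hrspec i).2.1 ((hgJ i).symm.trans h3.symm)
    have hxrole := hroledisj (J i) (g i) hyx
    exact (chordOf_unique (hABC (J i)).1 (hABC (J i)).2.1 (hABC (J i)).2.2
      (hP_mem (J i)) (hQ_mem (J i)) (hPQ (J i)) hxrole hxp hxq).symm
  have hJJ : ∀ i < n, J (J i) = i := by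
    intro i h
    have : J (J i) = List.idxOf (r (J i)) cyc := rfl
    rw [this, hrr i]
    exact hindexg i h
  have hJne : ∀ i < n, J i ≠ i := by
    intro i _ h
    exact hrne i ((hgJ i).symm.trans (by rw [h]))
  -- segments
  set dd : ℕ → Bool := fun i => decide (i < J i) with hdd
  set T : ℕ → List (TriV V) := fun i =>
    if i < n then seg1 (g i) (A i) (B i) (C i) (g (i + (n-1))) (g (i+1)) (dd i)
    else seg2 (g (i-n)) (A (i-n)) (B (i-n)) (C (i-n)) (g ((i-n) + (n-1))) (g ((i-n)+1)) with hT
  set H : ℕ → TriV V := fun i => outerV (g i) (g (i + (n-1))) with hHdef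
  have hgsub : ∀ i, n ≤ i → g (i - n) = g i := by
    intro i h
    conv_rhs => rw [show i = (i - n) + n by omega]
    rw [hgaddn]
  have hH0 : ∀ i < 2*n, ∀ b, (T i).headD b = H i := by
    intro i hi b
    by_cases h : i < n
    · have hTi : T i = seg1 (g i) (A i) (B i) (C i) (g (i + (n-1))) (g (i+1)) (dd i) := by
        simp only [hT, if_pos h]
      rw [hTi, seg1_headD _ (hP_mem i) (hQ_mem i) (hPQ i) (hABC i).1 (hABC i).2.1 (hABC i).2.2]
    · have hTi : T i = seg2 (g (i-n)) (A (i-n)) (B (i-n)) (C (i-n)) (g ((i-n) + (n-1))) (g ((i-n)+1)) := by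
        simp only [hT, if_neg h]
      rw [hTi, seg2_headD _ (hP_mem (i-n)) (hQ_mem (i-n)) (hPQ (i-n)) (hABC (i-n)).1
        (hABC (i-n)).2.1 (hABC (i-n)).2.2]
      show outerV (g (i-n)) (g ((i-n)+(n-1))) = H i
      rw [hgsub i (by omega),
        show g ((i-n)+(n-1)) = g (i + (n-1)) from by
          rw [show i + (n-1) = ((i-n)+(n-1)) + n by omega, hgaddn]]
  set vs : List (TriV V) := (List.range (2*n)).flatMap T with hvs
  have hvsne : vs ≠ [] := by
    intro h
    have h0 : T 0 = [] := List.flatMap_eq_nil_iff.mp h 0 (by simp; omega)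
    have h1 : T 0 ≠ [] := by
      simp only [hT, if_pos hnpos]
      exact seg1_ne_nil
    exact h1 h0
  have hH2n : H (2*n) = H 0 := by
    simp only [hHdef]
    rw [show 2*n = 0 + n + n by omega, hgaddn, hgaddn]
    rw [show 0 + n + n + (n-1) = (0 + (n-1)) + n + n by omega, hgaddn, hgaddn]
  set ps : List (Sym2 (TriV V)) := chainEdges vs (H 0) with hps0
  have hflat : ps = (List.range (2*n)).flatMap (fun i => chainEdges (T i) (H (i+1))) := by
    have h := chainEdges_flatMap T H (2*n) hH0 (2*n) 0 (by omega)
    rw [hps0, hvs, List.range_eq_range', ← hH2n]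
    simpa using h
  have hz : ∀ i : ℕ, H (i+1) = outerV (g (i+1)) (g i) := by
    intro i
    simp only [hHdef]
    rw [show i + 1 + (n-1) = i + n by omega, hgaddn]
  -- the multiset of tour edges
  have hpsm : (↑ps : Multiset (Sym2 (TriV V))) = triExpEdges R ch := by
    rw [hflat, coe_flatMap_range, show 2*n = n + n from two_mul n, Finset.sum_range_add]
    have hfirst : ∀ i ∈ Finset.range n, (↑(chainEdges (T i) (H (i+1))) : Multiset (Sym2 (TriV V))) =
        ↑(chainEdges (seg1 (g i) (A i) (B i) (C i) (g (i + (n-1))) (g (i+1)) (dd i))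
          (outerV (g (i+1)) (g i))) := by
      intro i hi
      rw [Finset.mem_range] at hi
      rw [hz i]
      simp only [hT, if_pos hi]
    have hsecond : ∀ i ∈ Finset.range n,
        (↑(chainEdges (T (n+i)) (H (n+i+1))) : Multiset (Sym2 (TriV V))) =
        ↑(chainEdges (seg2 (g i) (A i) (B i) (C i) (g (i + (n-1))) (g (i+1)))
          (outerV (g (i+1)) (g i))) := by
      intro i hi
      have h1 : ¬ (n + i < n) := by omega
      have h2 : n + i - n = i := by omega
      have h3 : H (n+i+1) = outerV (g (i+1)) (g i) := by
        simp only [hHdef]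
        rw [show n+i+1 = (i+1)+n by omega, hgaddn,
          show (i+1)+n + (n-1) = (i + n) + n by omega, hgaddn, hgaddn]
      simp only [hT, if_neg h1, h2, h3]
    rw [Finset.sum_congr rfl hfirst, Finset.sum_congr rfl hsecond, ← Finset.sum_add_distrib]
    have hseg : ∀ i ∈ Finset.range n,
        ((↑(chainEdges (seg1 (g i) (A i) (B i) (C i) (g (i + (n-1))) (g (i+1)) (dd i))
          (outerV (g (i+1)) (g i))) : Multiset (Sym2 (TriV V))) +
         ↑(chainEdges (seg2 (g i) (A i) (B i) (C i) (g (i + (n-1))) (g (i+1)))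
          (outerV (g (i+1)) (g i)))) =
        triExpIntra (g i) (A i) (B i) (C i) +
          ({s(outerV (g i) (g (i+1)), outerV (g (i+1)) (g i))} +
           {s(outerV (g i) (g (i+1)), outerV (g (i+1)) (g i))}) +
          (if dd i then ({s(outerV (g i) (r i), outerV (r i) (g i)),
                          s(outerV (g i) (r i), outerV (r i) (g i))} : Multiset (Sym2 (TriV V)))
           else 0) := by
      intro i _
      exact seg_edges (g i) (A i) (B i) (C i) _ _ _ _ (dd i)
        (hABC i).1 (hABC i).2.1 (hABC i).2.2 (hP_mem i) (hQ_mem i) (hPQ i)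
    rw [Finset.sum_congr rfl hseg]
    -- right-hand side
    have hval : R.verts.val = (↑cyc : Multiset V) := by
      rw [← hcycfin]
      show Multiset.dedup (↑cyc) = (↑cyc : Multiset V)
      exact Multiset.dedup_eq_self.mpr (by exact hnodup)
    have hgetDg : ∀ i, i < n → cyc.getD i w0 = g i := by
      intro i h
      simp only [hgdef0]
      rw [Nat.mod_eq_of_lt h]
    have hnbrmap : ∀ i ∈ Finset.range n,
        Multiset.map (fun y => s(outerV (g i) y, outerV y (g i))) (R.nbrFinset (g i)).val =
        (({s(outerV (g i) (g (i+(n-1))), outerV (g (i+(n-1))) (g i))} : Multiset (Sym2 (TriV V))) +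
         {s(outerV (g i) (g (i+1)), outerV (g (i+1)) (g i))}) +
         {s(outerV (g i) (r i), outerV (r i) (g i))} := by
      intro i _
      rw [hnbr i]
      have h1 : ({A i, B i, C i} : Finset V).val = ({A i, B i, C i} : Multiset V) := by
        rw [show ({A i, B i, C i} : Finset V) = insert (A i) (insert (B i) {C i}) from rfl]
        rw [Finset.insert_val_of_notMem (by simp [(hABC i).1, (hABC i).2.1]),
          Finset.insert_val_of_notMem (by simp [(hABC i).2.2])]
        rfl
      rw [h1, roles_perm (hABC i).1 (hABC i).2.1 (hABC i).2.2 (hP_mem i) (hQ_mem i) (hPQ i)]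
      show Multiset.map _ ((g (i+(n-1))) ::ₘ (g (i+1)) ::ₘ {r i}) = _
      simp only [Multiset.map_cons, Multiset.map_singleton, ← Multiset.singleton_add]
      abel
    rw [triExpEdges, hval]
    rw [list_bind_eq_sum _ w0 cyc, list_bind_eq_sum _ w0 cyc]
    have hr1 : ∀ i ∈ Finset.range cyc.length,
        triExpIntra (cyc.getD i w0) (ch (cyc.getD i w0)).1 (ch (cyc.getD i w0)).2.1
          (ch (cyc.getD i w0)).2.2 =
        triExpIntra (g i) (A i) (B i) (C i) := by
      intro i hi
      rw [Finset.mem_range] at hi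
      rw [hgetDg i hi]
    have hr2 : ∀ i ∈ Finset.range cyc.length,
        Multiset.map (fun y => s(outerV (cyc.getD i w0) y, outerV y (cyc.getD i w0)))
          (R.nbrFinset (cyc.getD i w0)).val =
        (({s(outerV (g i) (g (i+(n-1))), outerV (g (i+(n-1))) (g i))} : Multiset (Sym2 (TriV V))) +
         {s(outerV (g i) (g (i+1)), outerV (g (i+1)) (g i))}) +
         {s(outerV (g i) (r i), outerV (r i) (g i))} := by
      intro i hi
      rw [Finset.mem_range] at hi
      rw [hgetDg i hi]
      exact hnbrmap i (Finset.mem_range.mpr hi)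
    rw [Finset.sum_congr rfl hr1, Finset.sum_congr rfl hr2]
    -- pure sum identity now
    set Fm : ℕ → Multiset (Sym2 (TriV V)) :=
      fun i => {s(outerV (g i) (g (i+1)), outerV (g (i+1)) (g i))} with hFm
    set Pm : ℕ → Multiset (Sym2 (TriV V)) :=
      fun i => {s(outerV (g i) (g (i+(n-1))), outerV (g (i+(n-1))) (g i))} with hPm
    set Rc : ℕ → Multiset (Sym2 (TriV V)) :=
      fun i => {s(outerV (g i) (r i), outerV (r i) (g i))} with hRc
    have hFper : ∀ i, Fm (i + n) = Fm i := by
      intro i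
      simp only [hFm]
      rw [hgaddn, show i + n + 1 = (i+1) + n by omega, hgaddn]
    have key1 : ∑ i ∈ Finset.range n, Pm i = ∑ i ∈ Finset.range n, Fm i := by
      have h1 : ∀ i ∈ Finset.range n, Pm i = Fm (i + (n-1)) := by
        intro i _
        simp only [hFm, hPm]
        rw [show i + (n-1) + 1 = i + n by omega, hgaddn]
        rw [Sym2.eq_swap]
      rw [Finset.sum_congr rfl h1]
      exact sum_range_shift Fm n (by omega) hFper (n-1)
    have key2 : ∑ i ∈ Finset.range n, Rc i =
        ∑ i ∈ Finset.range n, (if dd i then ({s(outerV (g i) (r i), outerV (r i) (g i)),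
            s(outerV (g i) (r i), outerV (r i) (g i))} : Multiset (Sym2 (TriV V))) else 0) := by
      have hpair := pairing_sum n J Rc (fun i _ => hJlt i) hJJ hJne
        (fun i _ => by
          simp only [hRc]
          rw [hgJ i, hrr i, Sym2.eq_swap])
      rw [hpair]
      apply Finset.sum_congr rfl
      intro i _
      by_cases h : i < J i
      · simp only [hdd, if_pos h, decide_eq_true_eq, h, if_true, decide_true]
        simp only [hRc, Multiset.insert_eq_cons, ← Multiset.singleton_add]
      · simp [hdd, h]
    calc ∑ i ∈ Finset.range n,
          (triExpIntra (g i) (A i) (B i) (C i) + (Fm i + Fm i) +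
            (if dd i then ({s(outerV (g i) (r i), outerV (r i) (g i)),
              s(outerV (g i) (r i), outerV (r i) (g i))} : Multiset (Sym2 (TriV V))) else 0))
        = ∑ i ∈ Finset.range n, triExpIntra (g i) (A i) (B i) (C i) +
            (∑ i ∈ Finset.range n, Fm i + ∑ i ∈ Finset.range n, Fm i) +
            ∑ i ∈ Finset.range n, (if dd i then ({s(outerV (g i) (r i), outerV (r i) (g i)),
              s(outerV (g i) (r i), outerV (r i) (g i))} : Multiset (Sym2 (TriV V))) else 0) := by
          rw [Finset.sum_add_distrib, Finset.sum_add_distrib, Finset.sum_add_distrib]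
      _ = ∑ i ∈ Finset.range n, triExpIntra (g i) (A i) (B i) (C i) +
            ∑ i ∈ Finset.range n, ((Pm i + Fm i) + Rc i) := by
          rw [Finset.sum_add_distrib, Finset.sum_add_distrib, key1, ← key2]
          abel
  -- edge labels
  have hmap : Multiset.map Lam.ends Lam.edges.val = (↑ps : Multiset (Sym2 (TriV V))) :=
    hedges.trans hpsm.symm
  obtain ⟨es, hes, hmapes⟩ := exists_list_of_map_eq Lam.ends ps Lam.edges.val hmap
  have hesnodup : es.Nodup := by
    have h1 := Lam.edges.nodup
    rw [← hes] at h1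
    exact Multiset.coe_nodup.mp h1
  have hesfin : es.toFinset = Lam.edges := by
    apply Finset.val_inj.mp
    have h1 : es.toFinset.val = (↑es : Multiset E) := by
      show Multiset.dedup (↑es) = (↑es : Multiset E)
      exact Multiset.dedup_eq_self.mpr (by exact hesnodup)
    rw [h1, hes]
  have heslen : es.length = vs.length := by
    have h1 := congrArg List.length hmapes
    rw [List.length_map] at h1
    rw [h1, hps0]
    exact chainEdges_length _ _
  -- the zip specification
  obtain ⟨v0, t0, hvt⟩ := List.exists_cons_of_ne_nil hvsne
  have hv0 : v0 = H 0 := by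
    have h1 : vs.headD (H 0) = H 0 := by
      rw [hvs, show 2*n = (2*n-1)+1 by omega, List.range_succ_eq_map, List.flatMap_cons,
        headD_append, hH0 0 (by omega)]
    rw [hvt] at h1
    simpa using h1
  have hspec : ∀ p ∈ ps.zip (vs.zip (vs.rotate 1)), p.1 = s(p.2.1, p.2.2) := by
    have h1 : ps = chainEdges (v0 :: t0) v0 := by
      rw [hps0, hvt, ← hv0]
    rw [h1, hvt]
    exact chainEdges_spec_rotate v0 t0
  have hendscond : ∀ p ∈ es.zip (vs.zip (vs.rotate 1)), Lam.ends p.1 = s(p.2.1, p.2.2) := by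
    intro p hp
    have h1 : (Prod.map Lam.ends id p) ∈ (es.map Lam.ends).zip (vs.zip (vs.rotate 1)) := by
      rw [List.zip_map_left]
      exact List.mem_map_of_mem hp
    rw [hmapes] at h1
    have h2 := hspec _ h1
    simpa using h2
  -- vertex membership
  have hrfold : ∀ i, chordOf (A i) (B i) (C i) (g (i+(n-1))) (g (i+1)) = r i := fun i => rfl
  have hchordmem : ∀ i, outerV (r i) (g i) ∈ triExpVerts R ch := by
    intro i
    have hadj : R.Adj (g (J i)) (g i) := by rw [hgJ i]; exact hR.1 _ _ (hAdjR i)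
    have hrole := hroledisj (J i) (g i) hadj
    rw [← hgJ i]
    exact mem_triExpVerts_outer (hgmem (J i)) hrole
  have hvmem : ∀ y ∈ vs, y ∈ Lam.verts := by
    intro y hy
    rw [hverts]
    rw [hvs, List.mem_flatMap] at hy
    obtain ⟨i, hi, hyT⟩ := hy
    rw [List.mem_range] at hi
    have hgen : ∀ j : ℕ, y ∈ seg1 (g j) (A j) (B j) (C j) (g (j+(n-1))) (g (j+1)) (dd j) ++
        seg2 (g j) (A j) (B j) (C j) (g (j+(n-1))) (g (j+1)) → y ∈ triExpVerts R ch := by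
      intro j hyj
      have h7 := seg_mem (d := dd j) (hP_mem j) (hQ_mem j) (hPQ j)
        (hABC j).1 (hABC j).2.1 (hABC j).2.2 y hyj
      rw [hrfold j] at h7
      rcases h7 with h1|h1|h1|h1|h1|h1|h1
      · rw [h1]; exact mem_triExpVerts_base (hgmem j)
      · rw [h1]; exact mem_triExpVerts_outer (hgmem j) (Or.inl rfl)
      · rw [h1]; exact mem_triExpVerts_outer (hgmem j) (Or.inr (Or.inl rfl))
      · rw [h1]; exact mem_triExpVerts_outer (hgmem j) (Or.inr (Or.inr rfl))
      · rw [h1]; exact mem_triExpVerts_inner (hgmem j) (Or.inl rfl)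
      · rw [h1]; exact mem_triExpVerts_inner (hgmem j) (Or.inr rfl)
      · rw [h1]; exact hchordmem j
    by_cases h : i < n
    · refine hgen i (List.mem_append_left _ ?_)
      simpa only [hT, if_pos h] using hyT
    · refine hgen (i - n) (List.mem_append_right _ ?_)
      simpa only [hT, if_neg h] using hyT
  -- the filter property
  have hbaseinj : Function.Injective (baseV : V → TriV V) := by
    intro u v h
    simpa [baseV] using h
  have hfil : vs.filter (fun y => decide (y ∈ R.verts.image baseV)) =
      (cyc.map baseV) ++ (cyc.map baseV) := by
    rw [hvs, filter_flatMap]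
    have hper : ∀ i ∈ List.range (2*n),
        (T i).filter (fun y => decide (y ∈ R.verts.image baseV)) = [baseV (g i)] := by
      intro i hi
      rw [List.mem_range] at hi
      by_cases h : i < n
      · have h1 := (seg_filter (x := g i) (d := dd i) (R.verts.image baseV)
          (Finset.mem_image_of_mem _ (hgmem i)) (fun u w => outer_not_mem_image)
          (fun u w => inner_not_mem_image) (hP_mem i) (hQ_mem i) (hPQ i)
          (hABC i).1 (hABC i).2.1 (hABC i).2.2).1
        simp only [hT, if_pos h]
        exact h1
      · have h1 := (seg_filter (x := g (i-n)) (d := dd (i-n)) (R.verts.image baseV)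
          (Finset.mem_image_of_mem _ (hgmem (i-n))) (fun u w => outer_not_mem_image)
          (fun u w => inner_not_mem_image) (hP_mem (i-n)) (hQ_mem (i-n)) (hPQ (i-n))
          (hABC (i-n)).1 (hABC (i-n)).2.1 (hABC (i-n)).2.2).2
        simp only [hT, if_neg h]
        rw [h1, hgsub i (by omega)]
    rw [flatMap_congr hper, flatMap_singleton_map]
    have hmapcyc : (List.range n).map (fun i => baseV (g i)) = cyc.map baseV := by
      apply List.ext_getElem
      · simp [hn]
      · intro i h1 h2
        simp only [List.getElem_map, List.getElem_range]
        have h3 : i < n := by simpa using h1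
        rw [hglt i h3]
    rw [two_mul, List.range_add, List.map_append, List.map_map]
    have hsecondmap : (List.range n).map ((fun i => baseV (g i)) ∘ fun x => n + x) =
        (List.range n).map (fun i => baseV (g i)) := by
      apply List.map_congr_left
      intro i _
      simp only [Function.comp_apply]
      rw [Nat.add_comm, hgaddn]
    rw [hsecondmap, hmapcyc]
  -- final assembly
  refine ⟨vs, es, ⟨⟨hvsne, heslen, hesnodup, hesfin, hvmem, hendscond⟩, ?_⟩⟩
  refine ⟨cyc.map baseV, hnodup.map hbaseinj, ?_, ?_⟩
  · apply Finset.ext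
    intro y
    simp only [List.mem_toFinset, List.mem_map, Finset.mem_image, ← hcycfin]
  · exact (List.filter_congr (fun a _ => by exact decide_eq_decide.mpr Iff.rfl)).trans hfil
end
end

section
/- Let R be a 3-regular graph and Λ(R) its triangular-expansion. If Λ(R) allows a HAMSOET with respect to R, then R is Hamiltonian. -/
universe u v w

attribute [local instance 10] Classical.propDecidable

noncomputable section

variable {V : Type u} {E : Type v} {W : Type w}

private lemma filter_split {W : Type*} (p : W → Bool) :
    ∀ (vs L₁ L₂ : List W) (a : W), vs.filter p = L₁ ++ a :: L₂ →
      ∃ A B, vs = A ++ a :: B ∧ A.filter p = L₁ ∧ B.filter p = L₂ := by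
  intro vs
  induction vs with
  | nil =>
    intro L₁ L₂ a h
    simp only [List.filter_nil] at h
    exact absurd h.symm (List.append_ne_nil_of_right_ne_nil _ (by simp))
  | cons x t ih =>
    intro L₁ L₂ a h
    by_cases hx : p x
    · rw [List.filter_cons_of_pos hx] at h
      cases L₁ with
      | nil =>
        simp only [List.nil_append, List.cons.injEq] at h
        exact ⟨[], t, by simp [h.1], by simp, h.2⟩
      | cons y L₁' =>
        simp only [List.cons_append, List.cons.injEq] at h
        obtain ⟨hxy, hft⟩ := h
        subst hxy
        obtain ⟨A, B, h1, h2, h3⟩ := ih L₁' L₂ a hft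
        exact ⟨x :: A, B, by simp [h1], by simp [List.filter_cons_of_pos hx, h2], h3⟩
    · rw [List.filter_cons_of_neg hx] at h
      obtain ⟨A, B, h1, h2, h3⟩ := ih L₁ L₂ a h
      exact ⟨x :: A, B, by simp [h1], by simp [List.filter_cons_of_neg hx, h2], h3⟩

private lemma filter_adj {W : Type*} (p : W → Bool) (vs A B : List W) (a b : W)
    (h : vs.filter p = A ++ a :: b :: B) :
    ∃ A' X B', (∀ x ∈ X, p x = false) ∧ vs = A' ++ a :: (X ++ b :: B') := by
  obtain ⟨A', C, h1, _, h3⟩ := filter_split p vs A (b :: B) a h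
  obtain ⟨X, B', h4, h5, _⟩ := filter_split p C [] B b (by simpa using h3)
  refine ⟨A', X, B', fun x hx => ?_, by rw [h1, h4]⟩
  have := List.filter_eq_nil_iff.mp h5
  simpa using this x hx

private lemma adj_split {W : Type*} (L : List W) (i : ℕ) (h : i + 1 < L.length) :
    L = L.take i ++ L[i] :: L[i+1] :: L.drop (i+2) := by
  conv_lhs => rw [← List.take_append_drop i L]
  rw [List.drop_eq_getElem_cons (by omega), List.drop_eq_getElem_cons h]

private lemma exists_map_of_forall {W V : Type*} (f : V → W) :
    ∀ (s : List W), (∀ x ∈ s, ∃ v, x = f v) → ∃ s' : List V, s = s'.map f := by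
  intro s
  induction s with
  | nil => exact fun _ => ⟨[], rfl⟩
  | cons x t ih =>
    intro hx
    obtain ⟨v, hv⟩ := hx x (by simp)
    obtain ⟨s', hs'⟩ := ih fun y hy => hx y (by simp [hy])
    exact ⟨v :: s', by simp [hv, hs']⟩

private lemma getElem_idx_congr {α : Type*} (l : List α) {i j : ℕ} (h : i = j)
    (hi : i < l.length) : l[i]'hi = l[j]'(h ▸ hi) := by subst h; rfl

/-- if the triangular-expansion `Λ(R)` of a 3-regular graph
`R` allows a HAMSOET with respect to `R`, then `R` is Hamiltonian. -/
theorem hamiltonian_of_hamsoet (R : LGraph V) (hR : R.IsGraph)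
    (h3 : R.IsThreeRegular) (Lam : Multigraph (TriV V) E)
    (hexp : IsTriangularExpansion R Lam)
    (h : ∃ (vs : List (TriV V)) (es : List E), IsHAMSOET R Lam vs es) :
    R.IsHamiltonian := by
  classical
  obtain ⟨vs, es, ⟨⟨heul, s, hsnd, hsfin, hfilter⟩, hcons⟩⟩ := h
  obtain ⟨ch, -, hverts, -⟩ := hexp
  obtain ⟨hne, -, -, -, hmem, -⟩ := heul
  -- R.verts is nonempty
  have hRne : R.verts.Nonempty := by
    obtain ⟨x, hx⟩ := List.exists_mem_of_ne_nil vs hne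
    have hx' := hmem x hx
    rw [hverts] at hx'
    simp only [triExpVerts, Finset.mem_biUnion] at hx'
    obtain ⟨v, hv, -⟩ := hx'
    exact ⟨v, hv⟩
  -- s is the image of a list s' of vertices of R
  have hforall : ∀ x ∈ s, ∃ v, x = baseV v := by
    intro x hx
    have hx' : x ∈ R.verts.image baseV := by
      rw [← hsfin]
      simp only [List.mem_toFinset]
      exact hx
    obtain ⟨v, -, hv⟩ := Finset.mem_image.mp hx'
    exact ⟨v, hv.symm⟩
  obtain ⟨s', rfl⟩ := exists_map_of_forall baseV s hforall
  have hinj : Function.Injective (baseV : V → TriV V) := fun a b hab => by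
    simpa [baseV] using hab
  have hnd' : s'.Nodup := List.Nodup.of_map baseV hsnd
  have hfin' : s'.toFinset = R.verts := by
    apply Finset.image_injective hinj
    rw [← hsfin]
    ext y
    simp only [Finset.mem_image, List.mem_toFinset, List.mem_map]
  -- cardinality
  have hcard : s'.length = R.verts.card := by
    rw [← hfin', List.toFinset_card_of_nodup hnd']
  have h3le : 3 ≤ R.verts.card := by
    obtain ⟨x, hx⟩ := hRne
    calc 3 = (R.nbrFinset x).card := (h3 x hx).symm
      _ ≤ R.verts.card := Finset.card_le_card (Finset.filter_subset _ _)
  have hn3 : 3 ≤ s'.length := by omega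
  refine ⟨s', by omega, hnd', hfin', ?_⟩
  rintro ⟨a, b⟩ hp
  obtain ⟨i, hi, hgi⟩ := List.mem_iff_getElem.mp hp
  have hilt : i < s'.length := by
    rw [List.length_zip, List.length_rotate] at hi
    omega
  have hmodlt : (i + 1) % s'.length < s'.length := Nat.mod_lt _ (by omega)
  rw [List.getElem_zip] at hgi
  have ha : a = s'[i]'hilt := (congrArg Prod.fst hgi).symm
  have hb : b = s'[(i + 1) % s'.length]'hmodlt := by
    have h2 := congrArg Prod.snd hgi
    rw [List.getElem_rotate] at h2
    exact h2.symm
  -- the doubled word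
  have hi1 : i + 1 < (List.map baseV s' ++ List.map baseV s').length := by
    simp only [List.length_append, List.length_map]; omega
  have hL1 : (List.map baseV s' ++ List.map baseV s')[i]'(by omega) = baseV (s'[i]'hilt) :=
    (List.getElem_append_left (by simpa using hilt)).trans (List.getElem_map baseV)
  have hL2 : (List.map baseV s' ++ List.map baseV s')[i + 1]'hi1
      = baseV (s'[(i + 1) % s'.length]'hmodlt) := by
    by_cases hcase : i + 1 < s'.length
    · have e1 : (List.map baseV s' ++ List.map baseV s')[i + 1]'hi1
          = baseV (s'[i + 1]'hcase) :=
        (List.getElem_append_left (by simpa using hcase)).trans (List.getElem_map baseV)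
      rw [e1, getElem_idx_congr s' (Nat.mod_eq_of_lt hcase).symm hcase]
    · have hie : i + 1 = s'.length := by omega
      have e0 : 0 < s'.length := by omega
      have e1 : (List.map baseV s' ++ List.map baseV s')[i + 1]'hi1
          = baseV (s'[i + 1 - s'.length]'(by omega)) :=
        (List.getElem_append_right (by simpa using hie.ge)).trans
          (by rw [List.getElem_map]; congr 1; simp)
      rw [e1, getElem_idx_congr s' (show i + 1 - s'.length = (i + 1) % s'.length by
        rw [hie, Nat.sub_self, Nat.mod_self])]
  have hsplit := adj_split (List.map baseV s' ++ List.map baseV s') i hi1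
  rw [hL1, hL2] at hsplit
  obtain ⟨A', X, B', hX, hvs⟩ :=
    filter_adj _ vs _ _ _ _ (hfilter.trans hsplit)
  have hconsIn : ConsecutiveIn vs (R.verts.image baseV)
      (baseV (s'[i]'hilt)) (baseV (s'[(i + 1) % s'.length]'hmodlt)) := by
    refine ⟨A', X, B', fun x hx => ?_, Or.inl hvs⟩
    have := hX x hx
    simpa using this
  have hma : s'[i]'hilt ∈ R.verts := by
    rw [← hfin']
    simp only [List.mem_toFinset]
    exact List.getElem_mem hilt
  have hmb : s'[(i + 1) % s'.length]'hmodlt ∈ R.verts := by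
    rw [← hfin']
    simp only [List.mem_toFinset]
    exact List.getElem_mem hmodlt
  show R.Adj a b
  rw [ha, hb]
  exact hcons _ _ hma hmb hconsIn
end
end

section
/- Let G be a finite simple graph whose vertex set is the disjoint union of sets U and L with U ≠ ∅. Assume that for every l ∈ L there exists u ∈ U not adjacent to l, and for every u ∈ U there exists l ∈ L adjacent to u. Then there exist distinct vertices u_1, u_2 ∈ U and distinct vertices l_1, l_2 ∈ L such that u_1 is adjacent to l_1 but not to l_2, and u_2 is adjacent to l_2 but not to l_1. -/
universe u v w

attribute [local instance 10] Classical.propDecidable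

noncomputable section

variable {V : Type u} {E : Type v} {W : Type w}

/-- if `V(G) = U ⊔ L` with `U ≠ ∅`, every `l ∈ L` has a
non-neighbour in `U` and every `u ∈ U` has a neighbour in `L`, then there
are distinct `u₁, u₂ ∈ U` and distinct `l₁, l₂ ∈ L` with `u₁ ∼ l₁`,
`u₁ ≁ l₂`, `u₂ ∼ l₂`, `u₂ ≁ l₁`. -/
theorem exists_crossing_pairs (G : LGraph V) (hG : G.IsGraph)
    (U L : Finset V) (hdisj : Disjoint U L) (hunion : G.verts = U ∪ L)
    (hU : U.Nonempty)
    (h1 : ∀ l ∈ L, ∃ u ∈ U, ¬ G.Adj u l)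
    (h2 : ∀ u ∈ U, ∃ l ∈ L, G.Adj u l) :
    ∃ u₁ ∈ U, ∃ u₂ ∈ U, ∃ l₁ ∈ L, ∃ l₂ ∈ L, u₁ ≠ u₂ ∧ l₁ ≠ l₂ ∧
      G.Adj u₁ l₁ ∧ ¬ G.Adj u₁ l₂ ∧ G.Adj u₂ l₂ ∧ ¬ G.Adj u₂ l₁ := by
  by_contra hcon
  push_neg at hcon
  classical
  set f : V → Finset V := fun u => L.filter (G.Adj u) with hf
  obtain ⟨u₀, hu₀U, hmin⟩ := U.exists_min_image (fun u => (f u).card) hU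
  obtain ⟨l₀, hl₀L, hadj₀⟩ := h2 u₀ hu₀U
  obtain ⟨u, huU, hnadj⟩ := h1 l₀ hl₀L
  have hne : u ≠ u₀ := fun e => hnadj (e ▸ hadj₀)
  -- claim: f u₀ ⊆ f u
  have hsub : f u₀ ⊆ f u := by
    by_contra hns
    obtain ⟨l₁, hl₁, hl₁n⟩ := Finset.not_subset.1 hns
    have hl₁L : l₁ ∈ L := (Finset.mem_filter.1 hl₁).1
    have hadj₁ : G.Adj u₀ l₁ := (Finset.mem_filter.1 hl₁).2
    have hnadj₁ : ¬ G.Adj u l₁ := fun h =>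
      hl₁n (Finset.mem_filter.2 ⟨hl₁L, h⟩)
    have hsub2 : f u ⊆ f u₀ := by
      intro l₂ hl₂
      by_contra hl₂n
      have hl₂L : l₂ ∈ L := (Finset.mem_filter.1 hl₂).1
      have hadj₂ : G.Adj u l₂ := (Finset.mem_filter.1 hl₂).2
      have hnadj₂ : ¬ G.Adj u₀ l₂ := fun h =>
        hl₂n (Finset.mem_filter.2 ⟨hl₂L, h⟩)
      have hll : l₁ ≠ l₂ := fun e => hl₂n (e ▸ hl₁)
      exact hnadj₁
        (hcon u₀ hu₀U u huU l₁ hl₁L l₂ hl₂L hne.symm hll hadj₁ hnadj₂ hadj₂)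
    have hcard := hmin u huU
    have := Finset.eq_of_subset_of_card_le hsub2 hcard
    exact hl₁n (this ▸ hl₁)
  exact hnadj (Finset.mem_filter.1 (hsub (Finset.mem_filter.2 ⟨hl₀L, hadj₀⟩))).2
end
end

section
/- Let G be a connected graph and let G' be a connected graph with |V(G')| ≤ 3. Then G' is a vertex-minor of G if and only if V(G') ⊆ V(G). -/
universe u v w

attribute [local instance 10] Classical.propDecidable

noncomputable section

variable {V : Type u} {E : Type v} {W : Type w}

namespace LGraph

-- auxiliary lemmas

lemma ext' {G₁ G₂ : LGraph V} (hv : G₁.verts = G₂.verts)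
    (ha : ∀ x y, G₁.Adj x y ↔ G₂.Adj x y) : G₁ = G₂ := by
  cases G₁; cases G₂
  simp only [mk.injEq]
  exact ⟨hv, funext fun x => funext fun y => propext (ha x y)⟩

lemma adj_localComp (G : LGraph V) (v x y : V) :
    (G.localComp v).Adj x y ↔ x ≠ y ∧ Xor' (G.Adj x y) (G.Adj v x ∧ G.Adj v y) := Iff.rfl

lemma adj_induce (G : LGraph V) (A : Finset V) (x y : V) :
    (G.induce A).Adj x y ↔ G.Adj x y ∧ x ∈ A ∧ y ∈ A := Iff.rfl

@[simp] lemma verts_localComp (G : LGraph V) (v : V) : (G.localComp v).verts = G.verts := rfl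

@[simp] lemma verts_localCompSeq (G : LGraph V) (l : List V) :
    (G.localCompSeq l).verts = G.verts := by
  induction l generalizing G with
  | nil => rfl
  | cons x l ih => simpa [localCompSeq] using ih (G.localComp x)

lemma localCompSeq_cons (G : LGraph V) (x : V) (l : List V) :
    G.localCompSeq (x :: l) = (G.localComp x).localCompSeq l := rfl

lemma localCompSeq_append (G : LGraph V) (l m : List V) :
    G.localCompSeq (l ++ m) = (G.localCompSeq l).localCompSeq m :=
  List.foldl_append

lemma isGraph_localComp {G : LGraph V} (hG : G.IsGraph) (v : V) : (G.localComp v).IsGraph := by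
  obtain ⟨hs, hi, hsup⟩ := hG
  refine ⟨fun a b h => ?_, fun a h => ?_, fun a b h => ?_⟩
  · rw [adj_localComp] at h ⊢
    have := hs a b; have := hs b a; have := hs v a; have := hs v b
    unfold Xor' Xor at *
    tauto
  · exact h.1 rfl
  · rw [adj_localComp] at h
    obtain ⟨-, h⟩ := h
    unfold Xor' at h
    rcases h with ⟨h, -⟩ | ⟨⟨h1, h2⟩, -⟩
    · exact hsup _ _ h
    · exact ⟨(hsup _ _ h1).2, (hsup _ _ h2).2⟩

lemma isGraph_localCompSeq {G : LGraph V} (hG : G.IsGraph) (l : List V) :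
    (G.localCompSeq l).IsGraph := by
  induction l generalizing G with
  | nil => exact hG
  | cons x l ih => exact ih (isGraph_localComp hG x)

lemma reflTransGen_localComp {G : LGraph V} (hG : G.IsGraph) (v : V) {a b : V}
    (h : Relation.ReflTransGen G.Adj a b) :
    Relation.ReflTransGen (G.localComp v).Adj a b := by
  obtain ⟨hs, hi, hsup⟩ := hG
  induction h with
  | refl => exact Relation.ReflTransGen.refl
  | @tail x y h1 h2 ih =>
    refine ih.trans ?_
    by_cases hv : G.Adj v x ∧ G.Adj v y
    · have hxv : (G.localComp v).Adj x v := by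
        rw [adj_localComp]
        exact ⟨fun h => hi v (h ▸ hv.1), Or.inl ⟨hs _ _ hv.1, fun ⟨_, h⟩ => hi v h⟩⟩
      have hvy : (G.localComp v).Adj v y := by
        rw [adj_localComp]
        exact ⟨fun h => hi v (h ▸ hv.2), Or.inl ⟨hv.2, fun ⟨h, _⟩ => hi v h⟩⟩
      exact (Relation.ReflTransGen.single hxv).tail hvy
    · exact Relation.ReflTransGen.single ⟨fun h => hi x (h ▸ h2), Or.inl ⟨h2, hv⟩⟩

lemma connected_localCompSeq {G : LGraph V} (hG : G.IsGraph) (hc : G.Connected) (l : List V) :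
    (G.localCompSeq l).Connected := by
  induction l generalizing G with
  | nil => exact hc
  | cons x l ih =>
    refine ih (isGraph_localComp hG x) ⟨hc.1, fun a ha b hb => ?_⟩
    exact reflTransGen_localComp hG x (hc.2 a ha b hb)

lemma induce_localComp {G : LGraph V} {A : Finset V} {v : V} (hv : v ∈ A) :
    (G.induce A).localComp v = (G.localComp v).induce A := by
  refine ext' rfl fun x y => ?_
  simp only [adj_localComp, adj_induce, Xor', Xor]
  tauto

lemma induce_localCompSeq {G : LGraph V} {A : Finset V} {l : List V} (hl : ∀ x ∈ l, x ∈ A) :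
    (G.induce A).localCompSeq l = (G.localCompSeq l).induce A := by
  induction l generalizing G with
  | nil => rfl
  | cons x l ih =>
    rw [localCompSeq_cons, induce_localComp (hl x (by simp)), ih fun y hy => hl y (by simp [hy]),
      localCompSeq_cons]

-- walks

lemma getLast?_append_cons {α : Type*} (l1 : List α) (y : α) (l2 : List α) :
    (l1 ++ y :: l2).getLast? = (y :: l2).getLast? := by
  rw [List.getLast?_append]
  cases e : (y :: l2).getLast? with
  | none =>
    have : ((y :: l2).getLast?).isSome = true := List.getLast?_isSome.mpr (by simp)
    rw [e] at this; simp at this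
  | some z => rfl

lemma chain_concat {α : Type*} {R : α → α → Prop} {a b c : α} {p : List α}
    (h : List.Chain R a p) (hl : (a :: p).getLast? = some b) (hbc : R b c) :
    List.Chain R a (p ++ [c]) := by
  induction p generalizing a with
  | nil =>
    simp only [List.getLast?_singleton, Option.some_inj] at hl
    subst hl
    exact List.Chain.cons hbc List.Chain.nil
  | cons x q ih =>
    unfold List.Chain at h
    rw [List.chain_cons] at h
    rw [List.getLast?_cons_cons] at hl
    exact List.chain_cons.mpr ⟨h.1, ih h.2 hl⟩

def IsWalk (G : LGraph V) (a b : V) (p : List V) : Prop :=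
  List.Chain G.Adj a p ∧ (a :: p).getLast? = some b

lemma exists_walk {G : LGraph V} {a b : V} (h : Relation.ReflTransGen G.Adj a b) :
    ∃ p, G.IsWalk a b p := by
  induction h with
  | refl => exact ⟨[], List.Chain.nil, by simp⟩
  | @tail x y h1 h2 ih =>
    obtain ⟨p, hc, hl⟩ := ih
    refine ⟨p ++ [y], chain_concat hc hl h2, ?_⟩
    rw [show a :: (p ++ [y]) = (a :: p) ++ [y] by simp, List.getLast?_concat]

lemma exists_min {P : List V → Prop} (h : ∃ p, P p) :
    ∃ p, P p ∧ ∀ q, P q → p.length ≤ q.length := by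
  have h2 : ∃ n, ∃ p, P p ∧ p.length = n := by
    obtain ⟨p, hp⟩ := h; exact ⟨p.length, p, hp, rfl⟩
  obtain ⟨p, hp, hlen⟩ := Nat.find_spec h2
  exact ⟨p, hp, fun q hq => hlen ▸ Nat.find_min' h2 ⟨q, hq, rfl⟩⟩


end LGraph

namespace LGraph

lemma chain_localComp {G : LGraph V} (hG : G.IsGraph) (v : V) :
    ∀ (z : V) (t : List V), List.Chain G.Adj z t → (∀ y ∈ t, ¬ G.Adj v y) →
      List.Chain (G.localComp v).Adj z t := by
  obtain ⟨hs, hi, hsup⟩ := hG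
  intro z t
  induction t generalizing z with
  | nil => intro _ _; exact List.Chain.nil
  | cons y t iht =>
    intro hch hnot
    unfold List.Chain at hch ⊢
    rw [List.chain_cons] at hch ⊢
    refine ⟨⟨fun h => hi y (h ▸ hch.1), Or.inl ⟨hch.1, fun hh => hnot y (by simp) hh.2⟩⟩,
      iht y hch.2 fun z hz => hnot z (by simp [hz])⟩

lemma make_adj (n : ℕ) : ∀ (G : LGraph V), G.IsGraph → ∀ a b : V, a ≠ b →
    (∃ p, G.IsWalk a b p ∧ p.length ≤ n) →
    ∃ l, (∀ x ∈ l, x ∈ G.verts) ∧ (G.localCompSeq l).Adj a b := by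
  induction n using Nat.strong_induction_on with
  | _ n ih =>
  rintro G hG a b hab ⟨p, hp, hplen⟩
  obtain ⟨hs, hi, hsup⟩ := hG
  obtain ⟨q, hq, hmin⟩ := exists_min (⟨p, hp⟩ : ∃ p, G.IsWalk a b p)
  have hqlen : q.length ≤ n := le_trans (hmin p hp) hplen
  match q, hq, hqlen, hmin with
  | [], ⟨_, hl⟩, _, _ =>
    simp only [List.getLast?_singleton, Option.some_inj] at hl
    exact absurd hl hab
  | [x], ⟨hc, hl⟩, _, _ =>
    rw [List.getLast?_cons_cons, List.getLast?_singleton, Option.some_inj] at hl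
    subst hl
    unfold List.Chain at hc
    rw [List.chain_cons] at hc
    exact ⟨[], by simp, hc.1⟩
  | v1 :: v2 :: rest, ⟨hc, hl⟩, hqlen, hmin =>
    unfold List.Chain at hc
    rw [List.chain_cons, List.chain_cons] at hc
    obtain ⟨h1, h2, h3⟩ := hc
    rw [List.getLast?_cons_cons] at hl
    -- minimality facts
    have hane : a ≠ v2 := by
      rintro rfl
      have : G.IsWalk a b rest := by
        refine ⟨h3, ?_⟩
        rw [List.getLast?_cons_cons] at hl
        cases rest with
        | nil =>
          simp only [List.getLast?_singleton, Option.some_inj] at hl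
          exact absurd hl hab
        | cons w t => exact hl
      have := hmin rest this
      simp at this
    have hnadj : ¬ G.Adj a v2 := by
      intro hadj
      have : G.IsWalk a b (v2 :: rest) := ⟨List.chain_cons.mpr ⟨hadj, h3⟩, by
        rw [List.getLast?_cons_cons]; rw [List.getLast?_cons_cons] at hl; exact hl⟩
      have := hmin _ this
      simp at this
    have hrest : ∀ y ∈ rest, ¬ G.Adj v1 y := by
      intro y hy hadj
      obtain ⟨r1, r2, rfl⟩ := List.append_of_mem hy
      have hwalk : G.IsWalk a b (v1 :: y :: r2) := by
        refine ⟨List.chain_cons.mpr ⟨h1, List.chain_cons.mpr ⟨hadj, (List.isChain_cons_split.mp h3).2⟩⟩, ?_⟩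
        rw [List.getLast?_cons_cons, List.getLast?_cons_cons]
        rw [List.getLast?_cons_cons, show v2 :: (r1 ++ y :: r2) = (v2 :: r1) ++ (y :: r2) by simp,
          getLast?_append_cons] at hl
        exact hl
      have := hmin _ hwalk
      simp at this; omega
    -- the new graph
    set G2 := G.localComp v1 with hG2
    have hG2g : G2.IsGraph := isGraph_localComp ⟨hs, hi, hsup⟩ v1
    have hadj2 : G2.Adj a v2 := ⟨hane, Or.inr ⟨⟨hs _ _ h1, h2⟩, hnadj⟩⟩
    have hwalk2 : G2.IsWalk a b (v2 :: rest) :=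
      ⟨List.chain_cons.mpr ⟨hadj2, chain_localComp ⟨hs, hi, hsup⟩ v1 v2 rest h3 hrest⟩, by
        rw [List.getLast?_cons_cons]; rw [List.getLast?_cons_cons] at hl; exact hl⟩
    have hlt : rest.length + 1 < n := by
      simp at hqlen; omega
    obtain ⟨l', hl', hadj'⟩ := ih (rest.length + 1) hlt G2 hG2g a b hab
      ⟨v2 :: rest, hwalk2, by simp⟩
    exact ⟨v1 :: l', by
      intro x hx
      rcases List.mem_cons.mp hx with rfl | hx
      · exact (hsup _ _ h1).2
      · simpa [hG2] using hl' x hx, hadj'⟩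
end LGraph

namespace LGraph

lemma make_triple (n : ℕ) : ∀ (G : LGraph V), G.IsGraph → ∀ a b c : V, a ≠ b → a ≠ c → b ≠ c →
    G.Adj a b →
    (∃ p, (G.IsWalk c a p ∨ G.IsWalk c b p) ∧ p.length ≤ n) →
    ∃ l, (∀ x ∈ l, x ∈ G.verts) ∧
      (((G.localCompSeq l).Adj a b ∧ ((G.localCompSeq l).Adj c a ∨ (G.localCompSeq l).Adj c b)) ∨
       ((G.localCompSeq l).Adj c a ∧ (G.localCompSeq l).Adj c b)) := by
  induction n using Nat.strong_induction_on with
  | _ n ih =>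
  rintro G hG a b c hab hac hbc hadjab ⟨p, hp, hplen⟩
  obtain ⟨hs, hi, hsup⟩ := hG
  obtain ⟨q, hq, hmin⟩ := exists_min (⟨p, hp⟩ : ∃ p, G.IsWalk c a p ∨ G.IsWalk c b p)
  have hqlen : q.length ≤ n := le_trans (hmin p hp) hplen
  have hq' : ∃ t, (t = a ∨ t = b) ∧ G.IsWalk c t q := by
    rcases hq with h | h
    exacts [⟨a, Or.inl rfl, h⟩, ⟨b, Or.inr rfl, h⟩]
  obtain ⟨t, htab, hct, hlast⟩ : ∃ t, (t = a ∨ t = b) ∧ List.Chain G.Adj c q ∧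
      (c :: q).getLast? = some t := by
    obtain ⟨t, h1, h2, h3⟩ := hq'; exact ⟨t, h1, h2, h3⟩
  clear hq hq' hp hplen
  match q, hct, hlast, hqlen, hmin with
  | [], hct, hlast, _, _ =>
    simp only [List.getLast?_singleton, Option.some_inj] at hlast
    subst hlast
    rcases htab with rfl | rfl
    exacts [absurd rfl hac.symm, absurd rfl hbc.symm]
  | [x], hct, hlast, _, _ =>
    rw [List.getLast?_cons_cons, List.getLast?_singleton, Option.some_inj] at hlast
    subst hlast
    unfold List.Chain at hct
    rw [List.chain_cons] at hct
    refine ⟨[], by simp, Or.inl ⟨hadjab, ?_⟩⟩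
    rcases htab with rfl | rfl
    exacts [Or.inl hct.1, Or.inr hct.1]
  | [u, x], hct, hlast, hqlen, hmin =>
    rw [List.getLast?_cons_cons, List.getLast?_cons_cons, List.getLast?_singleton,
      Option.some_inj] at hlast
    subst hlast
    unfold List.Chain at hct
    rw [List.chain_cons, List.chain_cons] at hct
    obtain ⟨hcu, hux, -⟩ := hct
    have hnca : ¬ G.Adj c a := by
      intro h
      have := hmin [a] (Or.inl ⟨List.chain_cons.mpr ⟨h, List.Chain.nil⟩, by simp⟩)
      simp at this
    have hncb : ¬ G.Adj c b := by
      intro h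
      have := hmin [b] (Or.inr ⟨List.chain_cons.mpr ⟨h, List.Chain.nil⟩, by simp⟩)
      simp at this
    have huv : u ∈ G.verts := (hsup _ _ hcu).2
    have huc : G.Adj u c := hs _ _ hcu
    have hKeq : G.localCompSeq [u] = G.localComp u := rfl
    rcases htab with rfl | rfl
    · -- x = a
      by_cases hub : G.Adj u b
      · refine ⟨[u], by simpa using huv, Or.inr ?_⟩
        rw [hKeq]
        exact ⟨⟨hac.symm, Or.inr ⟨⟨huc, hux⟩, hnca⟩⟩, ⟨hbc.symm, Or.inr ⟨⟨huc, hub⟩, hncb⟩⟩⟩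
      · refine ⟨[u], by simpa using huv, Or.inl ?_⟩
        rw [hKeq]
        exact ⟨⟨hab, Or.inl ⟨hadjab, fun hh => hub hh.2⟩⟩,
          Or.inl ⟨hac.symm, Or.inr ⟨⟨huc, hux⟩, hnca⟩⟩⟩
    · -- x = b
      by_cases hua : G.Adj u a
      · refine ⟨[u], by simpa using huv, Or.inr ?_⟩
        rw [hKeq]
        exact ⟨⟨hac.symm, Or.inr ⟨⟨huc, hua⟩, hnca⟩⟩, ⟨hbc.symm, Or.inr ⟨⟨huc, hux⟩, hncb⟩⟩⟩
      · refine ⟨[u], by simpa using huv, Or.inl ?_⟩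
        rw [hKeq]
        exact ⟨⟨hab, Or.inl ⟨hadjab, fun hh => hua hh.1⟩⟩,
          Or.inr ⟨hbc.symm, Or.inr ⟨⟨huc, hux⟩, hncb⟩⟩⟩
  | u :: w :: e :: rest, hct, hlast, hqlen, hmin =>
    unfold List.Chain at hct
    rw [List.chain_cons, List.chain_cons] at hct
    obtain ⟨hcu, huw, hwr⟩ := hct
    rw [List.getLast?_cons_cons] at hlast
    have hlast2 : (w :: e :: rest).getLast? = some t := by
      rw [List.getLast?_cons_cons] at hlast; exact hlast
    have hminw : ∀ q', G.IsWalk c t q' → (u :: w :: e :: rest).length ≤ q'.length := by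
      intro q' hw
      rcases htab with rfl | rfl
      exacts [hmin q' (Or.inl hw), hmin q' (Or.inr hw)]
    have hnca : ¬ G.Adj c a := by
      intro h
      have := hmin [a] (Or.inl ⟨List.chain_cons.mpr ⟨h, List.Chain.nil⟩, by simp⟩)
      simp at this
    have hncb : ¬ G.Adj c b := by
      intro h
      have := hmin [b] (Or.inr ⟨List.chain_cons.mpr ⟨h, List.Chain.nil⟩, by simp⟩)
      simp at this
    have hnua : ¬ G.Adj u a := by
      intro h
      have := hmin [u, a] (Or.inl ⟨List.chain_cons.mpr ⟨hcu, List.chain_cons.mpr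
        ⟨h, List.Chain.nil⟩⟩, by simp⟩)
      simp at this
    have hnub : ¬ G.Adj u b := by
      intro h
      have := hmin [u, b] (Or.inr ⟨List.chain_cons.mpr ⟨hcu, List.chain_cons.mpr
        ⟨h, List.Chain.nil⟩⟩, by simp⟩)
      simp at this
    have hcw_ne : c ≠ w := by
      rintro rfl
      have := hminw (e :: rest) ⟨hwr, hlast2⟩
      simp at this
    have hncw : ¬ G.Adj c w := by
      intro h
      have := hminw (w :: e :: rest) ⟨List.chain_cons.mpr ⟨h, hwr⟩, by
        rw [List.getLast?_cons_cons]; exact hlast2⟩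
      simp at this
    have hrest : ∀ y ∈ e :: rest, ¬ G.Adj u y := by
      intro y hy hadj
      obtain ⟨r1, r2, hsplit⟩ := List.append_of_mem hy
      rw [hsplit] at hwr hlast2
      have hwalk : G.IsWalk c t (u :: y :: r2) := by
        refine ⟨List.chain_cons.mpr ⟨hcu, List.chain_cons.mpr
          ⟨hadj, (List.isChain_cons_split.mp hwr).2⟩⟩, ?_⟩
        rw [List.getLast?_cons_cons, List.getLast?_cons_cons]
        rw [show w :: (r1 ++ y :: r2) = (w :: r1) ++ (y :: r2) by simp,
          getLast?_append_cons] at hlast2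
        exact hlast2
      have := hminw _ hwalk
      simp [hsplit] at this
      omega
    have huv : u ∈ G.verts := (hsup _ _ hcu).2
    have huc : G.Adj u c := hs _ _ hcu
    set G2 := G.localComp u with hG2
    have hG2g : G2.IsGraph := isGraph_localComp ⟨hs, hi, hsup⟩ u
    have hadjab2 : G2.Adj a b := ⟨hab, Or.inl ⟨hadjab, fun hh => hnua hh.1⟩⟩
    have hwalk2 : G2.IsWalk c t (w :: e :: rest) := by
      refine ⟨List.chain_cons.mpr ⟨⟨hcw_ne, Or.inr ⟨⟨huc, huw⟩, hncw⟩⟩,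
        chain_localComp ⟨hs, hi, hsup⟩ u w (e :: rest) hwr hrest⟩, ?_⟩
      rw [List.getLast?_cons_cons]; exact hlast2
    have hlt : rest.length + 2 < n := by simp at hqlen; omega
    obtain ⟨l', hl', hres⟩ := ih (rest.length + 2) hlt G2 hG2g a b c hab hac hbc hadjab2
      (by
        rcases htab with rfl | rfl
        exacts [⟨w :: e :: rest, Or.inl hwalk2, by simp⟩, ⟨w :: e :: rest, Or.inr hwalk2, by simp⟩])
    refine ⟨u :: l', ?_, hres⟩
    intro x hx
    rcases List.mem_cons.mp hx with rfl | hx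
    · exact huv
    · simpa [hG2] using hl' x hx
end LGraph

namespace LGraph

lemma isGraph_induce {G : LGraph V} (hG : G.IsGraph) (A : Finset V) : (G.induce A).IsGraph := by
  obtain ⟨hs, hi, hsup⟩ := hG
  refine ⟨fun a b h => ?_, fun a h => ?_, fun a b h => ?_⟩
  · rw [adj_induce] at h ⊢; exact ⟨hs _ _ h.1, h.2.2, h.2.1⟩
  · exact hi a h.1
  · rw [adj_induce] at h
    exact ⟨Finset.mem_inter.mpr ⟨(hsup _ _ h.1).1, h.2.1⟩,
      Finset.mem_inter.mpr ⟨(hsup _ _ h.1).2, h.2.2⟩⟩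

lemma reach3 {K : LGraph V} (hK : K.IsGraph) {a b c : V} (hv : K.verts = {a, b, c})
    {x y : V} (h : Relation.ReflTransGen K.Adj x y) :
    x = y ∨ K.Adj x y ∨ ∃ w, K.Adj x w ∧ K.Adj w y := by
  obtain ⟨hs, hi, hsup⟩ := hK
  induction h with
  | refl => exact Or.inl rfl
  | @tail p q h1 h2 ih =>
    rcases ih with rfl | hxp | ⟨w, hw1, hw2⟩
    · exact Or.inr (Or.inl h2)
    · exact Or.inr (Or.inr ⟨p, hxp, h2⟩)
    · by_cases e1 : q = x
      · exact Or.inl e1.symm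
      by_cases e2 : q = w
      · exact Or.inr (Or.inl (e2 ▸ hw1))
      by_cases e4 : x = p
      · exact Or.inr (Or.inl (e4 ▸ h2))
      exfalso
      have e3 : q ≠ p := fun e => hi p (e ▸ h2)
      have hxv : x ∈ K.verts := (hsup _ _ hw1).1
      have hwv : w ∈ K.verts := (hsup _ _ hw1).2
      have hpv : p ∈ K.verts := (hsup _ _ h2).1
      have hqv : q ∈ K.verts := (hsup _ _ h2).2
      have hxw : x ≠ w := fun e => hi x (e ▸ hw1)
      have hwp : w ≠ p := fun e => hi w (e ▸ hw2)
      rw [hv] at hxv hwv hpv hqv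
      simp only [Finset.mem_insert, Finset.mem_singleton] at hxv hwv hpv hqv
      rcases hxv with rfl | rfl | rfl <;> rcases hwv with rfl | rfl | rfl <;>
        rcases hpv with rfl | rfl | rfl <;> rcases hqv with rfl | rfl | rfl <;> simp_all

lemma adj_char {K : LGraph V} (hK : K.IsGraph) {a b c : V} (hv : K.verts = {a, b, c})
    (x y : V) :
    K.Adj x y ↔ ((x = a ∧ y = b ∨ x = b ∧ y = a) ∧ K.Adj a b) ∨
      ((x = a ∧ y = c ∨ x = c ∧ y = a) ∧ K.Adj a c) ∨
      ((x = b ∧ y = c ∨ x = c ∧ y = b) ∧ K.Adj b c) := by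
  obtain ⟨hs, hi, hsup⟩ := hK
  constructor
  · intro h
    have hx := (hsup _ _ h).1
    have hy := (hsup _ _ h).2
    rw [hv] at hx hy
    simp only [Finset.mem_insert, Finset.mem_singleton] at hx hy
    have hxy : x ≠ y := fun e => hi x (e ▸ h)
    have h' := hs _ _ h
    rcases hx with rfl | rfl | rfl <;> rcases hy with rfl | rfl | rfl <;>
      first
        | exact absurd rfl hxy
        | tauto
  · rintro (⟨(⟨rfl, rfl⟩ | ⟨rfl, rfl⟩), h⟩ | ⟨(⟨rfl, rfl⟩ | ⟨rfl, rfl⟩), h⟩ |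
      ⟨(⟨rfl, rfl⟩ | ⟨rfl, rfl⟩), h⟩)
    exacts [h, hs _ _ h, h, hs _ _ h, h, hs _ _ h]

lemma ext3 {K₁ K₂ : LGraph V} (hK₁ : K₁.IsGraph) (hK₂ : K₂.IsGraph) {a b c : V}
    (hv₁ : K₁.verts = {a, b, c}) (hv₂ : K₂.verts = {a, b, c})
    (e1 : K₁.Adj a b ↔ K₂.Adj a b) (e2 : K₁.Adj a c ↔ K₂.Adj a c)
    (e3 : K₁.Adj b c ↔ K₂.Adj b c) : K₁ = K₂ := by
  refine ext' (hv₁.trans hv₂.symm) fun x y => ?_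
  rw [adj_char hK₁ hv₁, adj_char hK₂ hv₂, e1, e2, e3]

lemma missing_edge {K : LGraph V} (hK : K.IsGraph) (hconn : K.Connected) {x y z : V}
    (hxy : x ≠ y) (hxz : x ≠ z) (hyz : y ≠ z) (hv : K.verts = {x, y, z})
    (hmiss : ¬ K.Adj y z) : K.Adj x y ∧ K.Adj x z := by
  obtain ⟨hs, hi, hsup⟩ := hK
  have hy : y ∈ K.verts := by rw [hv]; simp
  have hz : z ∈ K.verts := by rw [hv]; simp
  have h := reach3 ⟨hs, hi, hsup⟩ hv (hconn.2 y hy z hz)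
  rcases h with rfl | h | ⟨w, hw1, hw2⟩
  · exact absurd rfl hyz
  · exact absurd h hmiss
  · have hwv : w ∈ K.verts := (hsup _ _ hw1).2
    rw [hv] at hwv
    simp only [Finset.mem_insert, Finset.mem_singleton] at hwv
    have hwy : w ≠ y := fun e => hi y (e ▸ hw1)
    have hwz : w ≠ z := fun e => hi z (e ▸ hw2)
    rcases hwv with rfl | rfl | rfl
    · exact ⟨hs _ _ hw1, hw2⟩
    · exact absurd rfl hwy
    · exact absurd rfl hwz

lemma adj_char2 {K : LGraph V} (hK : K.IsGraph) {a b : V} (hv : K.verts = {a, b})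
    (x y : V) :
    K.Adj x y ↔ ((x = a ∧ y = b) ∨ (x = b ∧ y = a)) ∧ K.Adj a b := by
  obtain ⟨hs, hi, hsup⟩ := hK
  constructor
  · intro h
    have hx := (hsup _ _ h).1
    have hy := (hsup _ _ h).2
    rw [hv] at hx hy
    simp only [Finset.mem_insert, Finset.mem_singleton] at hx hy
    have hxy : x ≠ y := fun e => hi x (e ▸ h)
    have h' := hs _ _ h
    rcases hx with rfl | rfl <;> rcases hy with rfl | rfl <;>
      first
        | exact absurd rfl hxy
        | tauto
  · rintro ⟨⟨rfl, rfl⟩ | ⟨rfl, rfl⟩, h⟩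
    exacts [h, hs _ _ h]

lemma adj_of_conn2 {K : LGraph V} (hK : K.IsGraph) (hconn : K.Connected) {a b : V}
    (hab : a ≠ b) (hv : K.verts = {a, b}) : K.Adj a b := by
  obtain ⟨hs, hi, hsup⟩ := hK
  have hv3 : K.verts = {a, b, b} := by rw [hv]; ext; simp
  have ha : a ∈ K.verts := by rw [hv]; simp
  have hb : b ∈ K.verts := by rw [hv]; simp
  have h := reach3 ⟨hs, hi, hsup⟩ hv3 (hconn.2 a ha b hb)
  rcases h with rfl | h | ⟨w, hw1, hw2⟩
  · exact absurd rfl hab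
  · exact h
  · have hwv : w ∈ K.verts := (hsup _ _ hw1).2
    rw [hv] at hwv
    simp only [Finset.mem_insert, Finset.mem_singleton] at hwv
    have hwa : w ≠ a := fun e => hi a (e ▸ hw1)
    have hwb : w ≠ b := fun e => hi b (e ▸ hw2)
    rcases hwv with rfl | rfl
    · exact absurd rfl hwa
    · exact absurd rfl hwb

end LGraph

namespace LGraph

lemma classify {K G' : LGraph V} (hK : K.IsGraph) (hG' : G'.IsGraph) {a b c : V}
    (hab : a ≠ b) (hac : a ≠ c) (hbc : b ≠ c)
    (hKv : K.verts = {a, b, c}) (hG'v : G'.verts = {a, b, c})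
    (hG'conn : G'.Connected)
    (hP : (K.Adj a b ∧ (K.Adj c a ∨ K.Adj c b)) ∨ (K.Adj c a ∧ K.Adj c b)) :
    ∃ m, (∀ x ∈ m, x ∈ ({a, b, c} : Finset V)) ∧ K.localCompSeq m = G' := by
  obtain ⟨hs, hi, hsup⟩ := hK
  -- Step 1 : reach the triangle
  have step1 : ∃ m1, (∀ x ∈ m1, x ∈ ({a, b, c} : Finset V)) ∧
      (K.localCompSeq m1).Adj a b ∧ (K.localCompSeq m1).Adj a c ∧
      (K.localCompSeq m1).Adj b c := by
    rcases hP with ⟨h1, h2 | h2⟩ | ⟨h2, h3⟩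
    · have hac' : K.Adj a c := hs _ _ h2
      by_cases hbcK : K.Adj b c
      · exact ⟨[], by simp, h1, hac', hbcK⟩
      · refine ⟨[a], by simp, ?_, ?_, ?_⟩
        · exact ⟨hab, Or.inl ⟨h1, fun hh => hi a hh.1⟩⟩
        · exact ⟨hac, Or.inl ⟨hac', fun hh => hi a hh.1⟩⟩
        · exact ⟨hbc, Or.inr ⟨⟨h1, hac'⟩, hbcK⟩⟩
    · have hbc' : K.Adj b c := hs _ _ h2
      by_cases hacK : K.Adj a c
      · exact ⟨[], by simp, h1, hacK, hbc'⟩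
      · refine ⟨[b], by simp, ?_, ?_, ?_⟩
        · exact ⟨hab, Or.inl ⟨h1, fun hh => hi b hh.2⟩⟩
        · exact ⟨hac, Or.inr ⟨⟨hs _ _ h1, hbc'⟩, hacK⟩⟩
        · exact ⟨hbc, Or.inl ⟨hbc', fun hh => hi b hh.1⟩⟩
    · by_cases habK : K.Adj a b
      · exact ⟨[], by simp, habK, hs _ _ h2, hs _ _ h3⟩
      · refine ⟨[c], by simp, ?_, ?_, ?_⟩
        · exact ⟨hab, Or.inr ⟨⟨h2, h3⟩, habK⟩⟩
        · exact ⟨hac, Or.inl ⟨hs _ _ h2, fun hh => hi c hh.2⟩⟩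
        · exact ⟨hbc, Or.inl ⟨hs _ _ h3, fun hh => hi c hh.2⟩⟩
  obtain ⟨m1, hm1, hTab, hTac, hTbc⟩ := step1
  set T := K.localCompSeq m1 with hT
  have hTg : T.IsGraph := isGraph_localCompSeq ⟨hs, hi, hsup⟩ m1
  have hTv : T.verts = {a, b, c} := by rw [hT, verts_localCompSeq, hKv]
  obtain ⟨hsT, hiT, hsupT⟩ := hTg
  -- Step 2 : from the triangle to G'
  have step2 : ∃ m2, (∀ x ∈ m2, x ∈ ({a, b, c} : Finset V)) ∧ T.localCompSeq m2 = G' := by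
    by_cases h1 : G'.Adj b c
    · by_cases h2 : G'.Adj a c
      · by_cases h3 : G'.Adj a b
        · exact ⟨[], by simp, ext3 ⟨hsT, hiT, hsupT⟩ hG' hTv hG'v
            (iff_of_true hTab h3) (iff_of_true hTac h2) (iff_of_true hTbc h1)⟩
        · -- ab missing : complement at c
          have hedge : G'.Adj c a ∧ G'.Adj c b := by
            refine missing_edge hG' hG'conn (Ne.symm hac) (Ne.symm hbc) hab ?_ h3
            rw [hG'v]; ext; simp; tauto
          refine ⟨[c], by simp, ?_⟩
          have hKeq : T.localCompSeq [c] = T.localComp c := rfl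
          rw [hKeq]
          refine ext3 (isGraph_localComp ⟨hsT, hiT, hsupT⟩ c) hG' hTv hG'v ?_ ?_ ?_
          · refine iff_of_false ?_ h3
            rintro ⟨-, (⟨-, hno⟩ | ⟨-, hno⟩)⟩
            · exact hno ⟨hsT _ _ hTac, hsT _ _ hTbc⟩
            · exact hno hTab
          · exact iff_of_true ⟨hac, Or.inl ⟨hTac, fun hh => hiT c hh.2⟩⟩ h2
          · exact iff_of_true ⟨hbc, Or.inl ⟨hTbc, fun hh => hiT c hh.2⟩⟩ h1
      · -- ac missing : complement at b
        have hedge : G'.Adj b a ∧ G'.Adj b c := by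
          refine missing_edge hG' hG'conn (Ne.symm hab) hbc hac ?_ h2
          rw [hG'v]; ext; simp; tauto
        refine ⟨[b], by simp, ?_⟩
        have hKeq : T.localCompSeq [b] = T.localComp b := rfl
        rw [hKeq]
        refine ext3 (isGraph_localComp ⟨hsT, hiT, hsupT⟩ b) hG' hTv hG'v ?_ ?_ ?_
        · exact iff_of_true ⟨hab, Or.inl ⟨hTab, fun hh => hiT b hh.2⟩⟩ (hG'.1 _ _ hedge.1)
        · refine iff_of_false ?_ h2
          rintro ⟨-, (⟨-, hno⟩ | ⟨-, hno⟩)⟩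
          · exact hno ⟨hsT _ _ hTab, hTbc⟩
          · exact hno hTac
        · exact iff_of_true ⟨hbc, Or.inl ⟨hTbc, fun hh => hiT b hh.1⟩⟩ hedge.2
    · -- bc missing : complement at a
      have hedge : G'.Adj a b ∧ G'.Adj a c :=
        missing_edge hG' hG'conn hab hac hbc hG'v h1
      refine ⟨[a], by simp, ?_⟩
      have hKeq : T.localCompSeq [a] = T.localComp a := rfl
      rw [hKeq]
      refine ext3 (isGraph_localComp ⟨hsT, hiT, hsupT⟩ a) hG' hTv hG'v ?_ ?_ ?_
      · exact iff_of_true ⟨hab, Or.inl ⟨hTab, fun hh => hiT a hh.1⟩⟩ hedge.1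
      · exact iff_of_true ⟨hac, Or.inl ⟨hTac, fun hh => hiT a hh.1⟩⟩ hedge.2
      · refine iff_of_false ?_ h1
        rintro ⟨-, (⟨-, hno⟩ | ⟨-, hno⟩)⟩
        · exact hno ⟨hTab, hTac⟩
        · exact hno hTbc
  obtain ⟨m2, hm2, heq⟩ := step2
  refine ⟨m1 ++ m2, ?_, by rw [localCompSeq_append, ← hT, heq]⟩
  intro x hx
  rcases List.mem_append.mp hx with hx | hx
  exacts [hm1 x hx, hm2 x hx]

end LGraph

/-- a connected graph `G'` on at most three vertices is a
vertex-minor of a connected graph `G` iff `V(G') ⊆ V(G)`. -/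
theorem small_connected_vertexMinor (G G' : LGraph V)
    (hG : G.IsGraph) (hG' : G'.IsGraph)
    (hGconn : G.Connected) (hG'conn : G'.Connected)
    (hcard : G'.verts.card ≤ 3) :
    G'.IsVertexMinor G ↔ G'.verts ⊆ G.verts := by
  constructor
  · rintro ⟨l, hl, heq⟩
    intro x hx
    have hv : G.verts ∩ G'.verts = G'.verts := by
      have := congrArg LGraph.verts heq
      rwa [show ((G.localCompSeq l).induce G'.verts).verts
        = (G.localCompSeq l).verts ∩ G'.verts from rfl, LGraph.verts_localCompSeq] at this
    rw [← hv] at hx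
    exact (Finset.mem_inter.mp hx).1
  · intro hsub
    obtain ⟨hne, hconn'⟩ := hG'conn
    have hc1 : 1 ≤ G'.verts.card := Finset.card_pos.mpr hne
    rcases (by omega : G'.verts.card = 1 ∨ G'.verts.card = 2 ∨ G'.verts.card = 3) with h | h | h
    · -- one vertex
      obtain ⟨a, ha⟩ := Finset.card_eq_one.mp h
      have hav : a ∈ G.verts := hsub (by rw [ha]; simp)
      refine ⟨[], by simp, ?_⟩
      have h0 : G.localCompSeq [] = G := rfl
      rw [h0]
      refine LGraph.ext' ?_ fun x y => ?_
      · show G.verts ∩ G'.verts = G'.verts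
        rw [ha]
        exact Finset.inter_eq_right.mpr (Finset.singleton_subset_iff.mpr hav)
      · rw [LGraph.adj_induce]
        constructor
        · rintro ⟨hxy, hx, hy⟩
          rw [ha] at hx hy
          simp only [Finset.mem_singleton] at hx hy
          subst hx; subst hy
          exact absurd hxy (hG.2.1 _)
        · intro hxy
          have hx := hG'.2.2 x y hxy
          rw [ha] at hx
          simp only [Finset.mem_singleton] at hx
          obtain ⟨rfl, hy⟩ := hx
          subst hy
          exact absurd hxy (hG'.2.1 _)
    · -- two vertices
      obtain ⟨a, b, hab, hveq⟩ := Finset.card_eq_two.mp h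
      have ha : a ∈ G.verts := hsub (by rw [hveq]; simp)
      have hb : b ∈ G.verts := hsub (by rw [hveq]; simp)
      have hG'ab : G'.Adj a b := LGraph.adj_of_conn2 hG' ⟨hne, hconn'⟩ hab hveq
      obtain ⟨p, hp⟩ := LGraph.exists_walk (hGconn.2 a ha b hb)
      obtain ⟨l, hl, hadj⟩ := LGraph.make_adj p.length G hG a b hab ⟨p, hp, le_refl _⟩
      set K := G.localCompSeq l with hKdef
      have hKg : K.IsGraph := LGraph.isGraph_localCompSeq hG l
      refine ⟨l, hl, ?_⟩
      rw [hveq]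
      have hsub2 : ({a, b} : Finset V) ⊆ K.verts := by
        rw [hKdef, LGraph.verts_localCompSeq]
        intro x hx
        simp only [Finset.mem_insert, Finset.mem_singleton] at hx
        rcases hx with rfl | rfl
        exacts [ha, hb]
      have hKIg : (K.induce {a, b}).IsGraph := LGraph.isGraph_induce hKg _
      have hKIv : (K.induce {a, b}).verts = {a, b} := Finset.inter_eq_right.mpr hsub2
      have hKab : (K.induce {a, b}).Adj a b := ⟨hadj, by simp, by simp⟩
      refine LGraph.ext' (hKIv.trans hveq.symm) fun x y => ?_
      rw [LGraph.adj_char2 hKIg hKIv, LGraph.adj_char2 hG' hveq]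
      exact ⟨fun ⟨h1, _⟩ => ⟨h1, hG'ab⟩, fun ⟨h1, _⟩ => ⟨h1, hKab⟩⟩
    · -- three vertices
      obtain ⟨a, b, c, hab, hac, hbc, hveq⟩ := Finset.card_eq_three.mp h
      have ha : a ∈ G.verts := hsub (by rw [hveq]; simp)
      have hb : b ∈ G.verts := hsub (by rw [hveq]; simp)
      have hc : c ∈ G.verts := hsub (by rw [hveq]; simp)
      obtain ⟨p1, hp1⟩ := LGraph.exists_walk (hGconn.2 a ha b hb)
      obtain ⟨l1, hl1, hadj1⟩ := LGraph.make_adj p1.length G hG a b hab ⟨p1, hp1, le_refl _⟩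
      set G1 := G.localCompSeq l1 with hG1def
      have hG1g : G1.IsGraph := LGraph.isGraph_localCompSeq hG l1
      have hG1conn : G1.Connected := LGraph.connected_localCompSeq hG hGconn l1
      have hG1v : G1.verts = G.verts := LGraph.verts_localCompSeq G l1
      obtain ⟨p2, hp2⟩ := LGraph.exists_walk
        (hG1conn.2 c (by rw [hG1v]; exact hc) a (by rw [hG1v]; exact ha))
      obtain ⟨l2, hl2, hP⟩ := LGraph.make_triple p2.length G1 hG1g a b c hab hac hbc hadj1
        ⟨p2, Or.inl hp2, le_refl _⟩
      set G2 := G1.localCompSeq l2 with hG2def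
      have hG2g : G2.IsGraph := LGraph.isGraph_localCompSeq hG1g l2
      have hG2v : G2.verts = G.verts := by rw [hG2def, LGraph.verts_localCompSeq, hG1v]
      have hsub3 : ({a, b, c} : Finset V) ⊆ G2.verts := by
        rw [hG2v]
        intro x hx
        simp only [Finset.mem_insert, Finset.mem_singleton] at hx
        rcases hx with rfl | rfl | rfl
        exacts [ha, hb, hc]
      set K := G2.induce {a, b, c} with hKdef
      have hKg : K.IsGraph := LGraph.isGraph_induce hG2g _
      have hKv : K.verts = {a, b, c} := Finset.inter_eq_right.mpr hsub3
      have hPK : (K.Adj a b ∧ (K.Adj c a ∨ K.Adj c b)) ∨ (K.Adj c a ∧ K.Adj c b) := by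
        rcases hP with ⟨h1, h2 | h2⟩ | ⟨h2, h3⟩
        · exact Or.inl ⟨⟨h1, by simp, by simp⟩, Or.inl ⟨h2, by simp, by simp⟩⟩
        · exact Or.inl ⟨⟨h1, by simp, by simp⟩, Or.inr ⟨h2, by simp, by simp⟩⟩
        · exact Or.inr ⟨⟨h2, by simp, by simp⟩, ⟨h3, by simp, by simp⟩⟩
      obtain ⟨m, hm, heq⟩ := LGraph.classify hKg hG' hab hac hbc hKv hveq ⟨hne, hconn'⟩ hPK
      refine ⟨l1 ++ l2 ++ m, ?_, ?_⟩
      · intro x hx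
        rcases List.mem_append.mp hx with hx | hx
        · rcases List.mem_append.mp hx with hx | hx
          · exact hl1 x hx
          · have := hl2 x hx; rwa [hG1v] at this
        · have := hm x hx
          simp only [Finset.mem_insert, Finset.mem_singleton] at this
          rcases this with rfl | rfl | rfl
          exacts [ha, hb, hc]
      · rw [hveq, LGraph.localCompSeq_append, LGraph.localCompSeq_append, ← hG1def, ← hG2def,
          ← LGraph.induce_localCompSeq hm, ← hKdef]
        exact heq
end
end
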